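/- arXiv:1303.0784 — 6 statements merged into one kernel-verified Lean document; each statement's English description precedes it below -/
import Mathlib

section
/- Let D be an m×m real matrix such that 1 is not an eigenvalue of D (equivalently, det(I − D) ≠ 0). Then the growth rate of the sequence n ↦ det(I − Dⁿ) equals the product, over all complex eigenvalues λ of D counted with multiplicity, of max(1,|λ|); that is, max(1, limsup_{n→∞} |det(I − Dⁿ)|^{1/n}) = ∏_{λ ∈ spec(D)} max(1, |λ|). -/
open Filter

noncomputable def Complex.abs : AbsoluteValue ℂ ℝ :=
  IsAbsoluteValue.toAbsoluteValue (norm : ℂ → ℝ)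

lemma Complex.norm_eq_abs (z : ℂ) : ‖z‖ = Complex.abs z := rfl

lemma Complex.abs_ofReal (r : ℝ) : Complex.abs (r : ℂ) = |r| := by
  show ‖(r : ℂ)‖ = |r|
  simp

section auxiliary

open Polynomial Matrix

variable {m : ℕ}

variable {m : ℕ}

lemma charpoly_eval (M : Matrix (Fin m) (Fin m) ℂ) (r : ℂ) :
    M.charpoly.eval r = (Matrix.scalar (Fin m) r - M).det := by
  rw [Matrix.charpoly, _root_.eval_det, Matrix.matPolyEquiv_charmatrix]
  simp

lemma charpoly_roots_card (M : Matrix (Fin m) (Fin m) ℂ) :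
    Multiset.card M.charpoly.roots = m := by
  rw [splits_iff_card_roots.mp (IsAlgClosed.splits M.charpoly)]
  simpa using M.charpoly_natDegree_eq_dim

lemma charpoly_eval_prod (M : Matrix (Fin m) (Fin m) ℂ) (a : ℂ) :
    M.charpoly.eval a = (M.charpoly.roots.map (fun z => a - z)).prod := by
  conv_lhs => rw [(IsAlgClosed.splits M.charpoly).eq_prod_roots_of_monic
    M.charpoly_monic]
  rw [eval_multiset_prod, Multiset.map_map]
  simp [Function.comp]

lemma det_sub_smul_one (M : Matrix (Fin m) (Fin m) ℂ) (a : ℂ) :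
    (M - a • 1).det = (M.charpoly.roots.map (fun z => z - a)).prod := by
  have h1 : M - a • 1 = -(Matrix.scalar (Fin m) a - M) := by
    simp [Matrix.scalar, smul_eq_diagonal_mul]
  rw [h1, Matrix.det_neg, ← charpoly_eval, charpoly_eval_prod, Fintype.card_fin]
  have : ((-1 : ℂ) ^ m) = (M.charpoly.roots.map (fun _ => (-1 : ℂ))).prod := by
    simp [Multiset.map_const', Multiset.prod_replicate, charpoly_roots_card]
  rw [this, ← Multiset.prod_map_mul]
  apply congrArg
  apply Multiset.map_congr rfl
  intro z hz
  ring

lemma det_aeval_eq (M : Matrix (Fin m) (Fin m) ℂ) (p : ℂ[X]) :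
    ((Polynomial.aeval M) p).det = (M.charpoly.roots.map (fun z => p.eval z)).prod := by
  set f : ℂ[X] →* ℂ :=
    (Matrix.detMonoidHom : Matrix (Fin m) (Fin m) ℂ →* ℂ).comp
      ((Polynomial.aeval M).toRingHom.toMonoidHom) with hf
  have hfdef : ∀ q : ℂ[X], f q = ((Polynomial.aeval M) q).det := fun q => rfl
  rw [← hfdef]
  conv_lhs => rw [(IsAlgClosed.splits p).eq_prod_roots]
  rw [_root_.map_mul, ← Multiset.prod_hom _ f, Multiset.map_map]
  have hC : f (C p.leadingCoeff) = p.leadingCoeff ^ m := by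
    rw [hfdef]
    simp [aeval_C, Matrix.algebraMap_eq_diagonal]
  have hX : ∀ a : ℂ, f (X - C a) = (M.charpoly.roots.map (fun z => z - a)).prod := by
    intro a
    rw [hfdef]
    have : (Polynomial.aeval M) (X - C a) = M - a • 1 := by
      simp [aeval_X, aeval_C, Matrix.algebraMap_eq_diagonal, smul_eq_diagonal_mul]
    rw [this, det_sub_smul_one]
  simp only [Function.comp, hX, hC]
  rw [Multiset.prod_map_prod_map]
  have hev : ∀ z : ℂ, p.eval z = p.leadingCoeff * ((p.roots.map (fun a => z - a)).prod) := by
    intro z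
    conv_lhs => rw [(IsAlgClosed.splits p).eq_prod_roots]
    rw [eval_mul, eval_C, eval_multiset_prod, Multiset.map_map]
    simp [Function.comp]
  rw [Multiset.map_congr rfl (fun z _ => hev z), Multiset.prod_map_mul]
  congr 1
  simp [Multiset.map_const', Multiset.prod_replicate, charpoly_roots_card]

lemma abs_det_one_sub_pow (D : Matrix (Fin m) (Fin m) ℝ) (n : ℕ) :
    |(1 - D ^ n).det| =
      (((D.map Complex.ofReal).charpoly.roots).map
        (fun z => Complex.abs (1 - z ^ n))).prod := by
  set M : Matrix (Fin m) (Fin m) ℂ := D.map Complex.ofReal with hM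
  have hmap : Complex.ofRealHom.mapMatrix ((1 : Matrix (Fin m) (Fin m) ℝ) - D ^ n)
      = 1 - M ^ n := by
    rw [map_sub, _root_.map_one, map_pow]
    rfl
  have hdet : (Complex.ofReal ((1 - D ^ n).det) : ℂ) = (1 - M ^ n).det := by
    rw [show (Complex.ofReal ((1 - D ^ n).det) : ℂ) = Complex.ofRealHom ((1 - D ^ n).det) from rfl,
      RingHom.map_det, hmap]
  have haeval : (Polynomial.aeval M) (1 - X ^ n : ℂ[X]) = 1 - M ^ n := by
    rw [map_sub, _root_.map_one, map_pow, aeval_X]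
  have hda := det_aeval_eq M (1 - X ^ n : ℂ[X])
  rw [haeval] at hda
  have habs : |(1 - D ^ n).det| = Complex.abs ((1 - M ^ n).det) := by
    rw [← hdet, Complex.abs_ofReal]
  rw [habs, hda, map_multiset_prod Complex.abs, Multiset.map_map]
  apply congrArg
  apply Multiset.map_congr rfl
  intro z hz
  simp


lemma exists_pow_close (s : Finset ℂ) (hs : ∀ z ∈ s, Complex.abs z = 1)
    {ε : ℝ} (hε : 0 < ε) (N : ℕ) :
    ∃ n, N ≤ n ∧ 1 ≤ n ∧ ∀ z ∈ s, Complex.abs (z ^ n - z) ≤ ε := by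
  classical
  set u : ℕ → (s → ℂ) := fun n z => (z : ℂ) ^ n with hu
  have hmem : ∀ n, u n ∈ Metric.closedBall (0 : s → ℂ) 1 := by
    intro n
    rw [Metric.mem_closedBall, dist_zero_right]
    refine (pi_norm_le_iff_of_nonneg zero_le_one).2 fun z => ?_
    rw [hu]
    simp only [Complex.norm_eq_abs, map_pow, hs z.1 z.2, one_pow, le_refl]
  obtain ⟨x, -, φ, hφ, hconv⟩ := (isCompact_closedBall (0 : s → ℂ) 1).tendsto_subseq hmem
  obtain ⟨K, hK⟩ := Metric.tendsto_atTop.1 hconv (ε / 2) (half_pos hε)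
  set a := φ K with ha
  set k2 := max K (a + N + 1) with hk2
  set b := φ k2 with hb
  have hab : a + N + 1 ≤ b := le_trans (le_max_right _ _) hφ.le_apply
  have hd : dist (u a) (u b) ≤ ε := by
    have h1 := hK K le_rfl
    have h2 := hK k2 (le_max_left _ _)
    calc dist (u a) (u b) ≤ dist (u a) x + dist (u b) x := dist_triangle_right _ _ _
    _ ≤ ε / 2 + ε / 2 := add_le_add h1.le h2.le
    _ = ε := add_halves ε
  refine ⟨b - a + 1, by omega, by omega, fun z hz => ?_⟩
  have hza : Complex.abs z = 1 := hs z hz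
  have key : Complex.abs (z ^ (b - a + 1) - z) = Complex.abs (z ^ a - z ^ b) := by
    have e1 : z ^ a - z ^ b = z ^ a * (1 - z ^ (b - a)) := by
      rw [mul_sub, mul_one, ← pow_add]
      congr 2
      omega
    have e2 : z ^ (b - a + 1) - z = z * (z ^ (b - a) - 1) := by
      rw [mul_sub, mul_one, ← pow_succ']
    rw [e1, e2, _root_.map_mul, _root_.map_mul, map_pow, hza, one_pow, one_mul, one_mul,
      AbsoluteValue.map_sub]
  rw [key]
  have hdc := dist_le_pi_dist (u a) (u b) ⟨z, hz⟩
  rw [Complex.dist_eq] at hdc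
  exact le_trans hdc hd


lemma abs_one_sub_pow_le (z : ℂ) (n : ℕ) :
    Complex.abs (1 - z ^ n) ≤ 2 * max 1 (Complex.abs z) ^ n := by
  have h1 : (1 : ℝ) ≤ max 1 (Complex.abs z) ^ n := one_le_pow₀ (le_max_left _ _)
  have h2 : Complex.abs (z ^ n) ≤ max 1 (Complex.abs z) ^ n := by
    rw [map_pow]
    exact pow_le_pow_left₀ (Complex.abs.nonneg z) (le_max_right _ _) n
  have h3 : Complex.abs (1 - z ^ n) ≤ Complex.abs 1 + Complex.abs (z ^ n) := by
    have := norm_sub_le (1 : ℂ) (z ^ n)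
    simpa [Complex.norm_eq_abs] using this
  simp only [_root_.map_one] at h3
  linarith

lemma abs_one_sub_pow_ge (z : ℂ) (n : ℕ) (hn : 1 ≤ n) (d : ℝ) (hd0 : 0 < d)
    (hlt : Complex.abs z < 1 → d ≤ 1 - Complex.abs z)
    (hgt : 1 < Complex.abs z → d ≤ 1 - (Complex.abs z)⁻¹)
    (heq : Complex.abs z = 1 →
      d ≤ Complex.abs (1 - z) / 2 ∧ Complex.abs (z ^ n - z) ≤ d) :
    d * max 1 (Complex.abs z) ^ n ≤ Complex.abs (1 - z ^ n) := by
  have habs : ∀ w : ℂ, Complex.abs w = ‖w‖ := fun w => rfl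
  rcases lt_trichotomy (Complex.abs z) 1 with h | h | h
  · rw [max_eq_left h.le, one_pow, mul_one]
    have h1 : Complex.abs (z ^ n) ≤ Complex.abs z := by
      rw [map_pow]
      calc Complex.abs z ^ n ≤ Complex.abs z ^ 1 :=
            pow_le_pow_of_le_one (Complex.abs.nonneg z) h.le hn
      _ = Complex.abs z := pow_one _
    have h2 : (1 : ℝ) - Complex.abs (z ^ n) ≤ Complex.abs (1 - z ^ n) := by
      have := norm_sub_norm_le (1 : ℂ) (z ^ n)
      simpa [Complex.norm_eq_abs] using this
    have := hlt h
    linarith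
  · rw [show max 1 (Complex.abs z) = 1 from max_eq_left h.le, one_pow, mul_one]
    obtain ⟨h1, h2⟩ := heq h
    have h3 : Complex.abs (1 - z) - Complex.abs (z ^ n - z) ≤ Complex.abs (1 - z ^ n) := by
      have h4 := norm_sub_norm_le ((1 : ℂ) - z) (z ^ n - z)
      have h5 : (1 : ℂ) - z - (z ^ n - z) = 1 - z ^ n := by ring
      rw [h5] at h4
      simpa [Complex.norm_eq_abs] using h4
    linarith
  · rw [max_eq_right h.le]
    have hz0 : (0 : ℝ) < Complex.abs z := lt_trans one_pos h
    have hA1 : Complex.abs z ≤ Complex.abs z ^ n :=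
      le_self_pow₀ (by linarith) (by omega)
    have hA0 : (0 : ℝ) ≤ Complex.abs z ^ n := by positivity
    have htri : Complex.abs z ^ n - 1 ≤ Complex.abs (1 - z ^ n) := by
      have h4 := norm_sub_norm_le (z ^ n) (1 : ℂ)
      rw [norm_sub_rev] at h4
      simpa [Complex.norm_eq_abs] using h4
    have hd' : d ≤ 1 - (Complex.abs z)⁻¹ := hgt h
    have h5 : d * Complex.abs z ^ n ≤ (1 - (Complex.abs z)⁻¹) * Complex.abs z ^ n :=
      mul_le_mul_of_nonneg_right hd' hA0
    have h6 : (Complex.abs z)⁻¹ * Complex.abs z ≤ (Complex.abs z)⁻¹ * Complex.abs z ^ n :=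
      mul_le_mul_of_nonneg_left hA1 (by positivity)
    have h7 : (Complex.abs z)⁻¹ * Complex.abs z = 1 := inv_mul_cancel₀ hz0.ne'
    nlinarith

lemma multiset_prod_map_le {s : Multiset ℂ} {f g : ℂ → ℝ}
    (h0 : ∀ x ∈ s, 0 ≤ f x) (h : ∀ x ∈ s, f x ≤ g x) :
    (s.map f).prod ≤ (s.map g).prod := by
  induction s using Multiset.induction with
  | empty => simp
  | cons a s ih =>
    simp only [Multiset.map_cons, Multiset.prod_cons]
    have hf0 : 0 ≤ (s.map f).prod :=
      Multiset.prod_nonneg (by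
        intro x hx
        obtain ⟨y, hy, rfl⟩ := Multiset.mem_map.1 hx
        exact h0 y (Multiset.mem_cons_of_mem hy))
    have hga : 0 ≤ g a :=
      le_trans (h0 a (Multiset.mem_cons_self a s)) (h a (Multiset.mem_cons_self a s))
    exact mul_le_mul (h a (Multiset.mem_cons_self a s))
      (ih (fun x hx => h0 x (Multiset.mem_cons_of_mem hx))
          (fun x hx => h x (Multiset.mem_cons_of_mem hx))) hf0 hga

lemma rpow_mul_pow_helper {c P : ℝ} (hc : 0 < c) (hP : 0 < P) {n : ℕ} (hn : 1 ≤ n) :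
    (c * P ^ n) ^ ((n : ℝ)⁻¹) = c ^ ((n : ℝ)⁻¹) * P := by
  have hn0 : (n : ℝ) ≠ 0 := by positivity
  rw [Real.mul_rpow hc.le (by positivity), ← Real.rpow_natCast P n,
    ← Real.rpow_mul hP.le, mul_inv_cancel₀ hn0, Real.rpow_one]

lemma tendsto_rpow_inv_mul {c P : ℝ} (hc : 0 < c) :
    Tendsto (fun n : ℕ => c ^ ((n : ℝ)⁻¹) * P) atTop (nhds P) := by
  have h0 : Tendsto (fun n : ℕ => ((n : ℝ)⁻¹)) atTop (nhds 0) :=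
    tendsto_inv_atTop_zero.comp tendsto_natCast_atTop_atTop
  have hc' : Tendsto (fun n : ℕ => c ^ ((n : ℝ)⁻¹)) atTop (nhds 1) := by
    have := (Real.continuousAt_const_rpow (a := c) (b := 0) hc.ne').tendsto.comp h0
    simpa [Function.comp_def] using this
  have := hc'.mul_const P
  simpa using this


end auxiliary

open Polynomial Matrix in
/-- The growth rate of `n ↦ det(I - Dⁿ)` equals the product over all complex
eigenvalues `λ` of `D` (counted with multiplicity) of `max 1 |λ|`, provided
`1` is not an eigenvalue of `D`. -/
theorem growth_det_one_sub_pow (m : ℕ) (D : Matrix (Fin m) (Fin m) ℝ)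
    (h : (1 - D).det ≠ 0) :
    max 1 (Filter.limsup
        (fun n : ℕ => |(1 - D ^ n).det| ^ ((n : ℝ)⁻¹)) Filter.atTop) =
      (((D.map (Complex.ofReal)).charpoly.roots).map
        (fun lam => max 1 ‖lam‖)).prod := by
  classical
  set R : Multiset ℂ := (D.map Complex.ofReal).charpoly.roots with hR
  set P : ℝ := (R.map (fun z => max 1 (Complex.abs z))).prod with hPdef
  set a : ℕ → ℝ := fun n => |(1 - D ^ n).det| with hadef
  set g : ℕ → ℝ := fun n => a n ^ ((n : ℝ)⁻¹) with hgdef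
  have hcard : Multiset.card R = m := charpoly_roots_card _
  have hid : ∀ n : ℕ, a n = (R.map (fun z => Complex.abs (1 - z ^ n))).prod :=
    fun n => abs_det_one_sub_pow D n
  -- every root satisfies |1 - z| > 0
  have hne1 : ∀ z ∈ R, 0 < Complex.abs (1 - z) := by
    intro z hz
    rcases eq_or_lt_of_le (Complex.abs.nonneg (1 - z)) with heq0 | hlt0
    · exfalso
      apply absurd (abs_eq_zero.mp _) h
      have h1 := hid 1
      simp only [pow_one] at h1
      have hzero : (R.map (fun x => Complex.abs (1 - x))).prod = 0 := by
        apply Multiset.prod_eq_zero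
        rw [Multiset.mem_map]
        exact ⟨z, hz, heq0.symm⟩
      rw [hzero] at h1
      simpa [hadef] using h1
    · exact hlt0
  -- 1 ≤ P and 0 < P
  have hP1 : (1 : ℝ) ≤ P := by
    have := multiset_prod_map_le (s := R) (f := fun _ => (1 : ℝ))
      (g := fun z => max 1 (Complex.abs z)) (fun x _ => zero_le_one)
      (fun x _ => le_max_left _ _)
    simpa [Multiset.map_const', Multiset.prod_replicate] using this
  have hP0 : (0 : ℝ) < P := lt_of_lt_of_le one_pos hP1
  -- the δ₀
  set dlt : ℂ → ℝ := fun z => min 1 (if Complex.abs z < 1 then 1 - Complex.abs z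
    else if 1 < Complex.abs z then 1 - (Complex.abs z)⁻¹
    else Complex.abs (1 - z) / 2) with hdlt
  set t : Finset ℂ := insert 2 R.toFinset with ht
  have ht2 : (2 : ℂ) ∈ t := Finset.mem_insert_self _ _
  set δ : ℝ := t.inf' (Finset.insert_nonempty _ _) dlt with hδ
  have hδpos : 0 < δ := by
    rw [hδ, Finset.lt_inf'_iff]
    intro z hz
    rw [hdlt]
    simp only [lt_min_iff]
    refine ⟨one_pos, ?_⟩
    rcases Finset.mem_insert.1 hz with rfl | hz'
    · norm_num [← Complex.norm_eq_abs]
    · have hzR : z ∈ R := Multiset.mem_toFinset.1 hz'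
      rcases lt_trichotomy (Complex.abs z) 1 with hc | hc | hc
      · rw [if_pos hc]; linarith
      · rw [if_neg (by rw [hc]; exact lt_irrefl 1), if_neg (by rw [hc]; exact lt_irrefl 1)]
        have := hne1 z hzR
        linarith
      · rw [if_neg (by linarith), if_pos hc]
        have h1 : (Complex.abs z)⁻¹ < 1 := inv_lt_one_of_one_lt₀ hc
        linarith
  have hδle : ∀ z ∈ R, δ ≤ (if Complex.abs z < 1 then 1 - Complex.abs z
      else if 1 < Complex.abs z then 1 - (Complex.abs z)⁻¹
      else Complex.abs (1 - z) / 2) := by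
    intro z hz
    exact le_trans
      (Finset.inf'_le _ (Finset.mem_insert_of_mem (Multiset.mem_toFinset.2 hz)))
      (min_le_right _ _)
  have hδ1 : δ ≤ 1 := le_trans (Finset.inf'_le _ ht2) (min_le_left _ _)
  -- upper bound on a n
  have hup : ∀ n : ℕ, a n ≤ 2 ^ m * P ^ n := by
    intro n
    rw [hid n]
    have := multiset_prod_map_le (s := R)
      (f := fun z => Complex.abs (1 - z ^ n))
      (g := fun z => 2 * max 1 (Complex.abs z) ^ n)
      (fun z _ => Complex.abs.nonneg _) (fun z _ => abs_one_sub_pow_le z n)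
    calc (R.map (fun z => Complex.abs (1 - z ^ n))).prod
        ≤ (R.map (fun z => 2 * max 1 (Complex.abs z) ^ n)).prod := this
      _ = 2 ^ m * P ^ n := by
          rw [Multiset.prod_map_mul, Multiset.prod_map_pow]
          simp [Multiset.map_const', Multiset.prod_replicate, hcard, hPdef]
  -- frequently, a n is large
  have hfreq : ∀ N : ℕ, ∃ n, N ≤ n ∧ 1 ≤ n ∧ δ ^ m * P ^ n ≤ a n := by
    intro N
    set s1 : Finset ℂ := R.toFinset.filter (fun z => Complex.abs z = 1) with hs1
    have hs1' : ∀ z ∈ s1, Complex.abs z = 1 := fun z hz => (Finset.mem_filter.1 hz).2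
    obtain ⟨n, hnN, hn1, hcl⟩ := exists_pow_close s1 hs1' hδpos N
    refine ⟨n, hnN, hn1, ?_⟩
    rw [hid n]
    have hpt : ∀ z ∈ R, δ * max 1 (Complex.abs z) ^ n ≤ Complex.abs (1 - z ^ n) := by
      intro z hz
      have hdz := hδle z hz
      refine abs_one_sub_pow_ge z n hn1 δ hδpos ?_ ?_ ?_
      · intro hc
        rwa [if_pos hc] at hdz
      · intro hc
        rwa [if_neg (by linarith : ¬ Complex.abs z < 1), if_pos hc] at hdz
      · intro hc
        have hn1' : ¬ Complex.abs z < 1 := by rw [hc]; exact lt_irrefl 1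
        have hn2' : ¬ 1 < Complex.abs z := by rw [hc]; exact lt_irrefl 1
        rw [if_neg hn1', if_neg hn2'] at hdz
        exact ⟨hdz, hcl z (Finset.mem_filter.2 ⟨Multiset.mem_toFinset.2 hz, hc⟩)⟩
    have := multiset_prod_map_le (s := R)
      (f := fun z => δ * max 1 (Complex.abs z) ^ n)
      (g := fun z => Complex.abs (1 - z ^ n))
      (fun z _ => by positivity) hpt
    calc δ ^ m * P ^ n
        = (R.map (fun z => δ * max 1 (Complex.abs z) ^ n)).prod := by
          rw [Multiset.prod_map_mul, Multiset.prod_map_pow]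
          simp [Multiset.map_const', Multiset.prod_replicate, hcard, hPdef]
      _ ≤ _ := this
  -- now the limsup analysis
  have ha0 : ∀ n, 0 ≤ a n := fun n => abs_nonneg _
  have hgle : ∀ n : ℕ, 1 ≤ n → g n ≤ (2 ^ m : ℝ) ^ ((n : ℝ)⁻¹) * P := by
    intro n hn
    rw [hgdef]
    calc a n ^ ((n : ℝ)⁻¹) ≤ (2 ^ m * P ^ n) ^ ((n : ℝ)⁻¹) :=
          Real.rpow_le_rpow (ha0 n) (hup n) (by positivity)
      _ = (2 ^ m : ℝ) ^ ((n : ℝ)⁻¹) * P := rpow_mul_pow_helper (by positivity) hP0 hn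
  have htend : Tendsto (fun n : ℕ => (2 ^ m : ℝ) ^ ((n : ℝ)⁻¹) * P) atTop (nhds P) :=
    tendsto_rpow_inv_mul (by positivity)
  have hevle : ∀ᶠ n : ℕ in atTop, g n ≤ (2 ^ m : ℝ) ^ ((n : ℝ)⁻¹) * P :=
    eventually_atTop.2 ⟨1, hgle⟩
  have hbddg : IsBoundedUnder (· ≤ ·) atTop g :=
    htend.isBoundedUnder_le.mono_le hevle
  have hub : limsup g atTop ≤ P := by
    calc limsup g atTop ≤ limsup (fun n : ℕ => (2 ^ m : ℝ) ^ ((n : ℝ)⁻¹) * P) atTop :=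
          limsup_le_limsup hevle
            (isCoboundedUnder_le_of_le atTop (x := 0)
              (fun n => Real.rpow_nonneg (ha0 n) _))
            htend.isBoundedUnder_le
      _ = P := htend.limsup_eq
  have hlb : P ≤ limsup g atTop := by
    apply le_of_forall_pos_le_add
    intro ε hε
    have hCt := tendsto_rpow_inv_mul (P := P) (pow_pos hδpos m)
    have hev : ∀ᶠ n : ℕ in atTop, P - ε ≤ (δ ^ m : ℝ) ^ ((n : ℝ)⁻¹) * P :=
      hCt.eventually (eventually_ge_nhds (by linarith))
    have hfr : ∃ᶠ n : ℕ in atTop, 1 ≤ n ∧ δ ^ m * P ^ n ≤ a n := by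
      rw [frequently_atTop]
      intro N
      obtain ⟨n, hnN, hn1, hle⟩ := hfreq N
      exact ⟨n, hnN, hn1, hle⟩
    have hfr2 : ∃ᶠ n : ℕ in atTop, P - ε ≤ g n := by
      refine (hfr.and_eventually hev).mono ?_
      rintro n ⟨⟨hn1, hle⟩, hev'⟩
      have : (δ ^ m * P ^ n) ^ ((n : ℝ)⁻¹) ≤ g n :=
        Real.rpow_le_rpow (by positivity) hle (by positivity)
      rw [rpow_mul_pow_helper (pow_pos hδpos m) hP0 hn1] at this
      linarith
    have := le_limsup_of_frequently_le hfr2 hbddg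
    linarith
  have hL : limsup g atTop = P := le_antisymm hub hlb
  show max 1 (limsup g atTop) = P
  rw [hL, max_eq_right hP1]
end

section
/- Let λ be a complex number with |λ| ≤ 1 such that λⁿ ≠ 1 for every integer n ≥ 1 (λ is not a root of unity and λ ≠ 1). Then limsup_{n→∞} (1/n)·log|1 − λⁿ| = 0. -/
open Filter

/-- If `|λ| ≤ 1` and `λ` is not `1` nor a root of unity, then
`limsup (1/n)·log|1 − λⁿ| = 0`. -/
theorem limsup_log_abs_one_sub_pow (lam : ℂ) (h : ‖lam‖ ≤ 1)
    (hroot : ∀ n : ℕ, 1 ≤ n → lam ^ n ≠ 1) :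
    Filter.limsup
      (fun n : ℕ => (1 / (n : ℝ)) * Real.log (‖1 - lam ^ n‖))
      Filter.atTop = 0 := by
  set f : ℕ → ℝ := fun n => (1 / (n : ℝ)) * Real.log (‖1 - lam ^ n‖) with hf
  have hpos' : ∀ n : ℕ, 1 ≤ n → 0 < ‖1 - lam ^ n‖ := by
    intro n hn
    simpa using sub_ne_zero.mpr (Ne.symm (hroot n hn))
  have habs : ∀ n : ℕ, ‖1 - lam ^ n‖ ≤ 2 := by
    intro n
    calc ‖1 - lam ^ n‖ ≤ ‖(1:ℂ)‖ + ‖lam ^ n‖ :=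
          norm_sub_le _ _
      _ ≤ 1 + 1 := by
          simp only [norm_one, norm_pow]
          have := pow_le_one₀ (norm_nonneg lam) h (n := n)
          linarith
      _ = 2 := by norm_num
  have hub : ∀ n : ℕ, f n ≤ Real.log 2 / n := by
    intro n
    rcases Nat.eq_zero_or_pos n with h0 | hpos
    · simp [hf, h0]
    · have hn : (0:ℝ) < n := by exact_mod_cast hpos
      have hfe : f n = Real.log (‖1 - lam ^ n‖) / n := by rw [hf]; ring
      rw [hfe]
      have := Real.log_le_log (hpos' n hpos) (habs n)
      exact div_le_div_of_nonneg_right this hn.le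
  have hbd : IsBoundedUnder (· ≤ ·) atTop f := by
    refine isBoundedUnder_of ⟨max (Real.log 2) 0, fun n => ?_⟩
    rcases Nat.eq_zero_or_pos n with h0 | hpos
    · simp [hf, h0]
    · have hn : (1:ℝ) ≤ n := by exact_mod_cast hpos
      have h2 : Real.log 2 / n ≤ Real.log 2 :=
        div_le_self (Real.log_nonneg (by norm_num)) hn
      exact le_trans (hub n) (le_trans h2 (le_max_left _ _))
  have hlam1 : lam ≠ 1 := by simpa using hroot 1 le_rfl
  have hc0 : (0:ℝ) < ‖1 - lam‖ := by
    simp [sub_ne_zero.mpr (Ne.symm hlam1)]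
  set c : ℝ := min (‖1 - lam‖ / 2) (1/2) with hc
  have hcpos : 0 < c := lt_min (by linarith) (by norm_num)
  have hc1 : c ≤ 1 := le_trans (min_le_right _ _) (by norm_num)
  have hkey : ∀ N : ℕ, ∃ n ≥ N, c ≤ ‖1 - lam ^ n‖ ∧ 1 ≤ n := by
    intro N
    rcases lt_or_eq_of_le h with hlt | heq
    · have htend : Tendsto (fun n : ℕ => ‖lam‖ ^ n) atTop (nhds 0) :=
        tendsto_pow_atTop_nhds_zero_of_lt_one (norm_nonneg _) hlt
      have hev := (htend.eventually (eventually_le_nhds (by norm_num : (0:ℝ) < 1/2))).and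
        (eventually_ge_atTop (max N 1))
      rcases hev.exists with ⟨n, hn2, hnN⟩
      refine ⟨n, le_trans (le_max_left _ _) hnN, ?_, le_trans (le_max_right _ _) hnN⟩
      have hns : ‖lam ^ n‖ ≤ 1/2 := by simpa [norm_pow] using hn2
      have hsub : ‖(1:ℂ)‖ - ‖lam ^ n‖ ≤ ‖1 - lam ^ n‖ := norm_sub_norm_le _ _
      simp only [norm_one] at hsub
      have : (1:ℝ)/2 ≤ ‖1 - lam ^ n‖ := by
        simp at hsub; linarith
      exact le_trans (min_le_right _ _) this
    · set m := max N 1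
      by_cases hm : c ≤ ‖1 - lam ^ m‖
      · exact ⟨m, le_max_left _ _, hm, le_max_right _ _⟩
      · push_neg at hm
        refine ⟨m + 1, le_trans (le_max_left _ _) (Nat.le_succ m), ?_,
          le_trans (le_max_right _ _) (Nat.le_succ m)⟩
        have hsplit : ‖lam ^ m - lam ^ (m+1)‖ ≤
            ‖lam ^ m - 1‖ + ‖1 - lam ^ (m+1)‖ := by
          calc ‖lam ^ m - lam ^ (m+1)‖
              = ‖(lam ^ m - 1) + (1 - lam ^ (m+1))‖ := by ring_nf
            _ ≤ _ := norm_add_le _ _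
        have heq1 : ‖lam ^ m - lam ^ (m+1)‖ = ‖1 - lam‖ := by
          have hh : lam ^ m - lam ^ (m+1) = lam ^ m * (1 - lam) := by ring
          rw [hh, norm_mul, norm_pow, heq, one_pow, one_mul]
        have h2 : ‖lam ^ m - 1‖ = ‖1 - lam ^ m‖ := by
          rw [← norm_neg]; ring_nf
        have hm' : ‖1 - lam ^ m‖ < ‖1 - lam‖ / 2 :=
          lt_of_lt_of_le hm (min_le_left _ _)
        have hfin : ‖1 - lam‖ / 2 ≤ ‖1 - lam ^ (m+1)‖ := by
          rw [heq1, h2] at hsplit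
          linarith
        exact le_trans (min_le_left _ _) hfin
  have hfreq : ∀ ε : ℝ, 0 < ε → ∃ᶠ n in atTop, -ε ≤ f n := by
    intro ε hε
    rw [frequently_atTop]
    intro N
    obtain ⟨N', hN'⟩ := exists_nat_ge (max (N:ℝ) (-Real.log c / ε))
    obtain ⟨n, hnN, hcn, hn1⟩ := hkey N'
    have hN1 : (N:ℝ) ≤ N' := le_trans (le_max_left _ _) hN'
    have hn0 : (0:ℝ) < n := by exact_mod_cast hn1
    refine ⟨n, le_trans (by exact_mod_cast hN1) hnN, ?_⟩
    have hlog : Real.log c ≤ Real.log (‖1 - lam ^ n‖) :=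
      Real.log_le_log hcpos hcn
    have hge : -Real.log c / ε ≤ n := by
      refine le_trans (le_trans (le_max_right _ _) hN') ?_
      exact_mod_cast hnN
    have h1 : -Real.log c ≤ n * ε := by
      rw [div_le_iff₀ hε] at hge; linarith
    have h2 : -ε ≤ Real.log c / n := by
      rw [le_div_iff₀ hn0]; nlinarith
    calc -ε ≤ Real.log c / n := h2
      _ ≤ Real.log (‖1 - lam ^ n‖) / n := by gcongr
      _ = f n := by rw [hf]; ring
  have hcob : IsCoboundedUnder (· ≤ ·) atTop f :=
    IsCoboundedUnder.of_frequently_ge (hfreq 1 one_pos)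
  have hg : Tendsto (fun n : ℕ => Real.log 2 / (n : ℝ)) atTop (nhds 0) :=
    tendsto_const_nhds.div_atTop tendsto_natCast_atTop_atTop
  have hle : limsup f atTop ≤ 0 := by
    have := limsup_le_limsup (Eventually.of_forall hub) hcob hg.isBoundedUnder_le
    rwa [hg.limsup_eq] at this
  have hgele : ∀ ε : ℝ, 0 < ε → -ε ≤ limsup f atTop := fun ε hε =>
    le_limsup_of_frequently_le (hfreq ε hε) hbd
  have hge : 0 ≤ limsup f atTop := by
    by_contra h'
    push_neg at h'
    have := hgele (-(limsup f atTop) / 2) (by linarith)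
    linarith
  exact le_antisymm hle hge
end

section
/- Let m be a natural number, and for each k = 0,…,m let n_k be a natural number with n_{m−k} = n_k and let A_k be an invertible n_k × n_k complex matrix. Let d be a nonzero complex number and suppose that for each k there is an invertible n_k × n_k complex matrix J_k with A_kᵀ · J_k · A_{m−k} = d · J_k. Set χ = Σ_{k=0}^{m} (−1)^k n_k and ε = ∏_{k=0}^{m} (det A_k)^{(−1)^{k+1}}. Then for every α ∈ {1, −1} and every nonzero complex number z such that det(I − αz·A_k) ≠ 0 for all k, one has ∏_{k=0}^{m} det(I − (α/(dz))·A_k)^{(−1)^{k+1}} = ε · (−αdz)^{χ} · ( ∏_{k=0}^{m} det(I − αz·A_k)^{(−1)^{k+1}} )^{(−1)^m}. -/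
open Finset Matrix

lemma lzfe_zpow_sum {a : ℂ} (ha : a ≠ 0) (s : Finset ℕ) (f : ℕ → ℤ) :
    a ^ (∑ i ∈ s, f i) = ∏ i ∈ s, a ^ f i := by
  induction s using Finset.cons_induction with
  | empty => simp
  | cons i s hi ih => rw [Finset.sum_cons, Finset.prod_cons, zpow_add₀ ha, ih]

lemma lzfe_key_det {N : ℕ} (Ak B J : Matrix (Fin N) (Fin N) ℂ)
    (hAk : IsUnit Ak.det) (hJu : IsUnit J.det) (d c : ℂ)
    (hrel : Akᵀ * J * B = d • J) (hcd : c * d ≠ 0) :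
    (1 - c • B).det = (Ak.det)⁻¹ * (-(c*d))^N * (1 - (c*d)⁻¹ • Ak).det := by
  have hAkT : IsUnit (Akᵀ).det := by rwa [Matrix.det_transpose]
  have hM : IsUnit (Akᵀ * J).det := by rw [Matrix.det_mul]; exact hAkT.mul hJu
  have hB : B = d • (J⁻¹ * (Akᵀ)⁻¹ * J) := by
    have h1 : (Akᵀ * J)⁻¹ * (Akᵀ * J * B) = (Akᵀ * J)⁻¹ * (d • J) := by rw [hrel]
    rw [← mul_assoc, Matrix.nonsing_inv_mul _ hM, one_mul, Matrix.mul_smul,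
      Matrix.mul_inv_rev] at h1
    rw [h1, mul_assoc]
  have hJunit : IsUnit J := (Matrix.isUnit_iff_isUnit_det J).mpr hJu
  have h2 : (1 : Matrix (Fin N) (Fin N) ℂ) - c • B
      = J⁻¹ * ((1 : Matrix (Fin N) (Fin N) ℂ) - (c*d) • (Akᵀ)⁻¹) * J := by
    rw [hB, smul_smul, Matrix.mul_sub, Matrix.sub_mul, Matrix.mul_one,
      Matrix.nonsing_inv_mul _ hJu, Matrix.mul_smul, Matrix.smul_mul, mul_assoc]
  rw [h2, Matrix.det_conj' hJunit]
  rw [← Matrix.transpose_nonsing_inv, ← Matrix.transpose_smul, ← Matrix.transpose_one,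
    ← Matrix.transpose_sub, Matrix.det_transpose]
  have h3 : (1 : Matrix (Fin N) (Fin N) ℂ) - (c*d) • Ak⁻¹ = Ak⁻¹ * (Ak - (c*d) • 1) := by
    rw [Matrix.mul_sub, Matrix.nonsing_inv_mul _ hAk, Matrix.mul_smul, Matrix.mul_one]
  have h4 : Ak - (c*d) • (1 : Matrix (Fin N) (Fin N) ℂ)
      = (-(c*d)) • ((1 : Matrix (Fin N) (Fin N) ℂ) - (c*d)⁻¹ • Ak) := by
    rw [smul_sub, smul_smul]
    have : -(c*d) * (c*d)⁻¹ = -1 := by rw [neg_mul, mul_inv_cancel₀ hcd]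
    rw [this]
    simp [neg_smul, sub_eq_add_neg, add_comm]
  rw [h3, Matrix.det_mul, h4, Matrix.det_smul, Matrix.det_nonsing_inv,
    Ring.inverse_eq_inv', Fintype.card_fin]
  simp only [Matrix.transpose_one]
  ring


lemma lzfe_prod_reflect (f : ℕ → ℂ) (m : ℕ) :
    ∏ j ∈ Finset.range (m+1), f j = ∏ j ∈ Finset.range (m+1), f (m - j) := by
  rw [← Finset.prod_range_reflect]
  apply Finset.prod_congr rfl
  intro j hj
  exact congrArg f (by omega)

lemma lzfe_sum_reflect (f : ℕ → ℤ) (m : ℕ) :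
    ∑ j ∈ Finset.range (m+1), f j = ∑ j ∈ Finset.range (m+1), f (m - j) := by
  rw [← Finset.sum_range_reflect]
  apply Finset.sum_congr rfl
  intro j hj
  exact congrArg f (by omega)

/-- Functional equation for the Lefschetz-zeta-type product: if the invertible
matrices `A k` (`k = 0,…,m`) satisfy a Poincaré-duality relation
`(A k)ᵀ · J k · A (m−k) = d · J k` with `J k` invertible, then the alternating
product of `det(I − (α/(dz))·A k)` equals
`ε · (−αdz)^χ · (∏ det(I − αz·A k)^{(−1)^{k+1}})^{(−1)^m}`. -/
theorem lefschetz_zeta_functional_equation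
    (m : ℕ) (n : ℕ → ℕ)
    (hn : ∀ k, k ≤ m → n (m - k) = n k)
    (A : (k : ℕ) → Matrix (Fin (n k)) (Fin (n k)) ℂ)
    (hA : ∀ k, k ≤ m → IsUnit (A k).det)
    (d : ℂ) (hd : d ≠ 0)
    (hJ : ∀ k (hk : k ≤ m), ∃ J : Matrix (Fin (n k)) (Fin (n k)) ℂ,
      IsUnit J.det ∧
        (A k)ᵀ * J * (Matrix.reindex (finCongr (hn k hk)) (finCongr (hn k hk))
          (A (m - k))) = d • J)
    (α : ℂ) (hα : α = 1 ∨ α = -1)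
    (z : ℂ) (hz : z ≠ 0)
    (hdet : ∀ k, k ≤ m → (1 - (α * z) • A k).det ≠ 0) :
    (∏ k ∈ Finset.range (m + 1),
        ((1 - (α / (d * z)) • A k).det) ^ ((-1 : ℤ) ^ (k + 1))) =
      (∏ k ∈ Finset.range (m + 1), ((A k).det) ^ ((-1 : ℤ) ^ (k + 1))) *
        (-(α * d * z)) ^ (∑ k ∈ Finset.range (m + 1), (-1 : ℤ) ^ k * (n k : ℤ)) *
        ((∏ k ∈ Finset.range (m + 1),
            ((1 - (α * z) • A k).det) ^ ((-1 : ℤ) ^ (k + 1))) ^ ((-1 : ℤ) ^ m)) := by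
  have hα0 : α ≠ 0 := by rcases hα with h | h <;> simp [h]
  have hα2 : α * α = 1 := by rcases hα with h | h <;> simp [h]
  set c : ℂ := α / (d * z) with hc
  have hcd : c * d = α / z := by
    rw [hc, div_mul_eq_mul_div, mul_comm d z, mul_div_mul_right _ _ hd]
  have hcdne : α / z ≠ 0 := div_ne_zero hα0 hz
  have hαinv : α⁻¹ = α := inv_eq_of_mul_eq_one_right hα2
  have hinv : (α / z)⁻¹ = α * z := by
    rw [inv_div, div_eq_mul_inv, hαinv, mul_comm]
  -- key per-index identity
  have key : ∀ j, j ≤ m → (1 - c • A (m - j)).det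
      = ((A j).det)⁻¹ * (-(α/z)) ^ (n j) * (1 - (α*z) • A j).det := by
    intro j hj
    obtain ⟨J, hJu, hrel⟩ := hJ j hj
    set e := finCongr (hn j hj)
    set B := Matrix.reindex e e (A (m - j)) with hBdef
    have hres : (1 - c • A (m - j)).det = (1 - c • B).det := by
      have : (1 : Matrix (Fin (n j)) (Fin (n j)) ℂ) - c • B
          = ((1 : Matrix (Fin (n (m-j))) (Fin (n (m-j))) ℂ) - c • A (m - j)).submatrix
              e.symm e.symm := by
        ext i k
        simp [hBdef, Matrix.reindex_apply, Matrix.sub_apply, Matrix.smul_apply,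
          Matrix.one_apply, Matrix.submatrix_apply, EmbeddingLike.apply_eq_iff_eq]
      rw [this, Matrix.det_submatrix_equiv_self]
    rw [hres, lzfe_key_det (A j) B J (hA j hj) hJu d c hrel (by rw [hcd]; exact hcdne),
      hcd, hinv]
  -- duality for determinants
  have hdual : ∀ j, j ≤ m → (A j).det * (A (m - j)).det = d ^ (n j) := by
    intro j hj
    obtain ⟨J, hJu, hrel⟩ := hJ j hj
    have h1 := congrArg Matrix.det hrel
    rw [Matrix.det_mul, Matrix.det_mul, Matrix.det_transpose, Matrix.det_reindex_self,
      Matrix.det_smul, Fintype.card_fin] at h1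
    have h2 : (A j).det * (A (m - j)).det * J.det = d ^ (n j) * J.det := by
      linear_combination h1
    exact mul_right_cancel₀ hJu.ne_zero h2
  have hAne : ∀ j, j ≤ m → (A j).det ≠ 0 := fun j hj => (hA j hj).ne_zero
  have hbase : -(α / z) ≠ 0 := neg_ne_zero.mpr hcdne
  set χ : ℤ := ∑ k ∈ Finset.range (m + 1), (-1 : ℤ) ^ k * (n k : ℤ) with hχ
  have step1 : (∏ k ∈ Finset.range (m + 1),
        ((1 - c • A k).det) ^ ((-1 : ℤ) ^ (k + 1)))
      = (∏ j ∈ Finset.range (m + 1), ((A j).det) ^ ((-1 : ℤ) ^ (m + j)))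
        * (∏ j ∈ Finset.range (m + 1), (-(α/z)) ^ ((n j : ℤ) * (-1 : ℤ) ^ (m + j + 1)))
        * (∏ j ∈ Finset.range (m + 1),
            (((1 - (α*z) • A j).det) ^ ((-1 : ℤ) ^ (j + 1))) ^ ((-1 : ℤ) ^ m)) := by
    rw [lzfe_prod_reflect (fun k => ((1 - c • A k).det) ^ ((-1 : ℤ) ^ (k + 1))) m,
      ← Finset.prod_mul_distrib, ← Finset.prod_mul_distrib]
    apply Finset.prod_congr rfl
    intro j hj
    have hj' : j ≤ m := Nat.lt_succ_iff.mp (Finset.mem_range.mp hj)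
    beta_reduce
    rw [key j hj']
    have hE : (-1 : ℤ) ^ ((m - j) + 1) = (-1 : ℤ) ^ (m + j + 1) := by
      have h2 : m + j + 1 = ((m - j) + 1) + 2*j := by omega
      rw [h2, pow_add (-1 : ℤ) ((m - j) + 1) (2*j), pow_mul]
      norm_num
    rw [hE, mul_zpow, mul_zpow]
    congr 1
    · congr 1
      · rw [_root_.inv_zpow']
        congr 1
        rw [pow_succ]
        ring
      · rw [← zpow_natCast (-(α/z)) (n j), ← _root_.zpow_mul]
    · rw [← _root_.zpow_mul]
      congr 1
      have h3 : m + j + 1 = (j + 1) + m := by omega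
      rw [h3, pow_add]
  have T1 : (∏ j ∈ Finset.range (m + 1), ((A j).det) ^ ((-1 : ℤ) ^ (m + j)))
      = (∏ k ∈ Finset.range (m + 1), ((A k).det) ^ ((-1 : ℤ) ^ (k + 1))) * d ^ χ := by
    rw [lzfe_prod_reflect (fun j => ((A j).det) ^ ((-1 : ℤ) ^ (m + j))) m,
      hχ, lzfe_zpow_sum hd, ← Finset.prod_mul_distrib]
    apply Finset.prod_congr rfl
    intro j hj
    have hj' : j ≤ m := Nat.lt_succ_iff.mp (Finset.mem_range.mp hj)
    beta_reduce
    have hE : (-1 : ℤ) ^ (m + (m - j)) = (-1 : ℤ) ^ j := by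
      have hj2 : ((-1 : ℤ) ^ j) * ((-1 : ℤ) ^ j) = 1 := by
        rw [← pow_add, ← two_mul, pow_mul]; norm_num
      have h3 : (-1 : ℤ) ^ (m + (m - j)) * (-1 : ℤ) ^ j = 1 := by
        have h2 : m + (m - j) + j = 2 * m := by omega
        rw [← pow_add, h2, pow_mul]; norm_num
      calc (-1 : ℤ) ^ (m + (m - j))
          = (-1 : ℤ) ^ (m + (m - j)) * ((-1:ℤ)^j * (-1:ℤ)^j) := by rw [hj2, mul_one]
        _ = ((-1 : ℤ) ^ (m + (m - j)) * (-1:ℤ)^j) * (-1:ℤ)^j := by ring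
        _ = (-1:ℤ)^j := by rw [h3, one_mul]
    have hAm : (A (m - j)).det = d ^ (n j) * ((A j).det)⁻¹ := by
      field_simp [hAne j hj']
      linear_combination hdual j hj'
    rw [hE, hAm, mul_zpow, _root_.inv_zpow', ← zpow_natCast d (n j), ← _root_.zpow_mul]
    have h5 : -(-1 : ℤ) ^ j = (-1 : ℤ) ^ (j + 1) := by rw [pow_succ]; ring
    rw [h5, mul_comm ((n j : ℤ)) ((-1:ℤ)^j), mul_comm]
  have T2 : (∏ j ∈ Finset.range (m + 1), (-(α/z)) ^ ((n j : ℤ) * (-1 : ℤ) ^ (m + j + 1)))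
      = (-(α/z)) ^ (-χ) := by
    rw [← lzfe_zpow_sum hbase]
    congr 1
    rw [lzfe_sum_reflect (fun j => (n j : ℤ) * (-1 : ℤ) ^ (m + j + 1)) m, hχ,
      ← Finset.sum_neg_distrib]
    apply Finset.sum_congr rfl
    intro j hj
    have hj' : j ≤ m := Nat.lt_succ_iff.mp (Finset.mem_range.mp hj)
    beta_reduce
    rw [hn j hj']
    have hE : (-1 : ℤ) ^ (m + (m - j) + 1) = -(-1 : ℤ) ^ j := by
      have hj2 : ((-1 : ℤ) ^ j) * ((-1 : ℤ) ^ j) = 1 := by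
        rw [← pow_add, ← two_mul, pow_mul]; norm_num
      have h3 : (-1 : ℤ) ^ (m + (m - j) + 1) * (-1 : ℤ) ^ j = -1 := by
        have h2 : m + (m - j) + 1 + j = 2 * m + 1 := by omega
        rw [← pow_add, h2, pow_succ, pow_mul]; norm_num
      calc (-1 : ℤ) ^ (m + (m - j) + 1)
          = (-1 : ℤ) ^ (m + (m - j) + 1) * ((-1:ℤ)^j * (-1:ℤ)^j) := by rw [hj2, mul_one]
        _ = ((-1 : ℤ) ^ (m + (m - j) + 1) * (-1:ℤ)^j) * (-1:ℤ)^j := by ring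
        _ = -(-1:ℤ)^j := by rw [h3]; ring
    rw [hE]; ring
  have T3 : (∏ j ∈ Finset.range (m + 1),
        (((1 - (α*z) • A j).det) ^ ((-1 : ℤ) ^ (j + 1))) ^ ((-1 : ℤ) ^ m))
      = (∏ j ∈ Finset.range (m + 1),
          ((1 - (α*z) • A j).det) ^ ((-1 : ℤ) ^ (j + 1))) ^ ((-1 : ℤ) ^ m) :=
    Finset.prod_zpow _ _ _
  rw [step1, T1, T2, T3]
  have hfinal : d ^ χ * (-(α/z)) ^ (-χ) = (-(α * d * z)) ^ χ := by
    rw [_root_.zpow_neg, ← _root_.inv_zpow, ← mul_zpow]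
    congr 1
    rw [inv_neg, hinv]
    ring
  calc (∏ k ∈ Finset.range (m + 1), ((A k).det) ^ ((-1 : ℤ) ^ (k + 1))) * d ^ χ
        * (-(α/z)) ^ (-χ)
        * ((∏ j ∈ Finset.range (m + 1),
            ((1 - (α*z) • A j).det) ^ ((-1 : ℤ) ^ (j + 1))) ^ ((-1 : ℤ) ^ m))
      = (∏ k ∈ Finset.range (m + 1), ((A k).det) ^ ((-1 : ℤ) ^ (k + 1)))
        * (d ^ χ * (-(α/z)) ^ (-χ))
        * ((∏ j ∈ Finset.range (m + 1),
            ((1 - (α*z) • A j).det) ^ ((-1 : ℤ) ^ (j + 1))) ^ ((-1 : ℤ) ^ m)) := by ring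
    _ = _ := by rw [hfinal]
end

section
/- Let X be a set, f : X → X a function, and n ≥ 1 a natural number. Suppose that for every divisor d of n the fixed point set Fix(f^d) = {x ∈ X : f^d(x) = x} is finite. Then n divides the integer Σ_{d ∣ n} μ(d) · #Fix(f^{n/d}), where μ is the Möbius function and #Fix denotes cardinality. -/
open Function

/-- Gauss congruence for the counts of fixed points of iterates: if all fixed
point sets of iterates `f^d` for `d ∣ n` are finite, then
`n ∣ Σ_{d ∣ n} μ(d) · #Fix(f^{n/d})`. -/
theorem gauss_congruence_fixed_points {X : Type*} (f : X → X) (n : ℕ) (hn : 1 ≤ n)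
    (hfin : ∀ d ∈ n.divisors, {x : X | f^[d] x = x}.Finite) :
    (n : ℤ) ∣ ∑ d ∈ n.divisors,
      (ArithmeticFunction.moebius d) * ({x : X | f^[n / d] x = x}.ncard : ℤ) := by
  classical
  have hn0 : n ≠ 0 := by omega
  set g : ℕ → ℤ := fun m => (({x : X | f^[m] x = x}.ncard : ℤ)) with hg
  set p : ℕ → ℤ := fun e => (({x : X | minimalPeriod f x = e}.ncard : ℤ)) with hp
  have key : ∀ m > 0, m ∈ {m | m ∣ n} → ∑ e ∈ m.divisors, p e = g m := by
    intro m hm hmn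
    have hmd : m ∈ n.divisors := Nat.mem_divisors.mpr ⟨hmn, hn0⟩
    have hF := hfin m hmd
    set F : Finset X := hF.toFinset with hFdef
    have hcard : F.card
        = ∑ e ∈ m.divisors, (F.filter (fun x => minimalPeriod f x = e)).card := by
      apply Finset.card_eq_sum_card_fiberwise
      intro x hx
      have hx' : IsPeriodicPt f m x := by
        simpa [hFdef, Set.Finite.mem_toFinset, IsPeriodicPt, IsFixedPt] using hx
      exact Nat.mem_divisors.mpr ⟨hx'.minimalPeriod_dvd, hm.ne'⟩
    have hgm : g m = (F.card : ℤ) := by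
      rw [hg]
      simp only [← Set.ncard_coe_finset, hFdef, Set.Finite.coe_toFinset]
    rw [hgm, hcard, Nat.cast_sum]
    refine Finset.sum_congr rfl fun e he => ?_
    have he' := Nat.mem_divisors.mp he
    have hset : {x : X | minimalPeriod f x = e}
        = ↑(F.filter (fun x => minimalPeriod f x = e)) := by
      ext x
      simp only [Set.mem_setOf_eq, Finset.coe_filter, Set.mem_setOf_eq, Finset.mem_coe]
      constructor
      · intro hx
        refine ⟨?_, hx⟩
        have hper : IsPeriodicPt f m x :=
          isPeriodicPt_iff_minimalPeriod_dvd.mpr (hx ▸ he'.1)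
        simpa [hFdef, Set.Finite.mem_toFinset, IsPeriodicPt, IsFixedPt] using hper
      · exact fun hx => hx.2
    show ({x : X | minimalPeriod f x = e}.ncard : ℤ) = _
    rw [hset, Set.ncard_coe_finset]
  have inv := (ArithmeticFunction.sum_eq_iff_sum_smul_moebius_eq_on {m | m ∣ n}
    (fun a b hab hb => hab.trans hb)).mp key n (by omega) dvd_rfl
  rw [← Nat.sum_divisorsAntidiagonal
    (fun a b => ((ArithmeticFunction.moebius a : ℤ)) * g b)]
  have hsum : ∑ x ∈ n.divisorsAntidiagonal,
      ((ArithmeticFunction.moebius x.1 : ℤ)) * g x.2 = p n := by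
    rw [← inv]
    exact Finset.sum_congr rfl fun x _ => (zsmul_eq_mul _ _).symm
  rw [hsum]
  -- Now show `n ∣ p n` by partitioning the set of points of exact period `n` into orbits.
  have hSfin : {x : X | minimalPeriod f x = n}.Finite := by
    refine (hfin n (Nat.mem_divisors.mpr ⟨dvd_rfl, hn0⟩)).subset ?_
    intro x hx
    have : f^[minimalPeriod f x] x = x := iterate_minimalPeriod
    simpa [Set.mem_setOf_eq.mp hx] using this
  set T : Finset X := hSfin.toFinset with hTdef
  have hmemT : ∀ x ∈ T, minimalPeriod f x = n := by
    intro x hx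
    simpa [hTdef, Set.Finite.mem_toFinset] using hx
  have hfiber : T.card
      = ∑ O ∈ T.image (periodicOrbit f),
          (T.filter (fun y => periodicOrbit f y = O)).card :=
    Finset.card_eq_sum_card_fiberwise fun x hx => Finset.mem_image_of_mem _ hx
  have horb : ∀ x ∈ T,
      (T.filter (fun y => periodicOrbit f y = periodicOrbit f x)).card = n := by
    intro x hx
    have hxn : minimalPeriod f x = n := hmemT x hx
    have hxper : x ∈ periodicPts f := by
      rw [← minimalPeriod_pos_iff_mem_periodicPts, hxn]; omega
    have himg : T.filter (fun y => periodicOrbit f y = periodicOrbit f x)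
        = (Finset.range n).image (fun k => f^[k] x) := by
      ext y
      simp only [Finset.mem_filter, Finset.mem_image, Finset.mem_range]
      constructor
      · rintro ⟨hyT, hOrb⟩
        have hyn : minimalPeriod f y = n := hmemT y hyT
        have hyper : y ∈ periodicPts f := by
          rw [← minimalPeriod_pos_iff_mem_periodicPts, hyn]; omega
        have hy : y ∈ periodicOrbit f x := by
          rw [← hOrb]; exact self_mem_periodicOrbit hyper
        obtain ⟨k, hk⟩ := (mem_periodicOrbit_iff hxper).mp hy
        refine ⟨k % n, Nat.mod_lt _ (by omega), ?_⟩
        rw [← hxn] at *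
        rw [iterate_mod_minimalPeriod_eq, hk]
      · rintro ⟨k, _, rfl⟩
        constructor
        · have : minimalPeriod f (f^[k] x) = n := by
            rw [minimalPeriod_apply_iterate hxper, hxn]
          simpa [hTdef, Set.Finite.mem_toFinset] using this
        · exact periodicOrbit_apply_iterate_eq hxper k
    rw [himg, Finset.card_image_of_injOn, Finset.card_range]
    intro a ha b hb hab
    simp only [Finset.coe_range, Set.mem_Iio] at ha hb
    exact iterate_injOn_Iio_minimalPeriod (by rwa [hxn]) (by rwa [hxn]) hab
  have hdvd : n ∣ T.card := by
    rw [hfiber]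
    refine Finset.dvd_sum fun O hO => ?_
    obtain ⟨x, hx, rfl⟩ := Finset.mem_image.mp hO
    rw [horb x hx]
  have hpn : p n = (T.card : ℤ) := by
    show ({x : X | minimalPeriod f x = n}.ncard : ℤ) = _
    simp only [← Set.ncard_coe_finset, hTdef, Set.Finite.coe_toFinset]
  rw [hpn]
  exact Int.natCast_dvd_natCast.mpr hdvd
end

section
/- Let D and B be m×m complex matrices such that B^ℓ = D^ℓ for some natural number ℓ ≥ 1, and let λ_1,…,λ_m be the eigenvalues of D counted with multiplicity. Then |det(I − B)| ≤ ∏_{i=1}^{m} (1 + |λ_i|). -/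
open Polynomial

lemma my_eval_charpoly {m : ℕ} (A : Matrix (Fin m) (Fin m) ℂ) (t : ℂ) :
    A.charpoly.eval t = (t • (1 : Matrix (Fin m) (Fin m) ℂ) - A).det := by
  rw [Matrix.charpoly, _root_.eval_det, Matrix.matPolyEquiv_charmatrix]
  simp [Matrix.scalar, Matrix.smul_one_eq_diagonal, Pi.algebraMap_def]

lemma my_list_prod_range {M : Type*} [CommMonoid M] (f : ℕ → M) (n : ℕ) :
    ((List.range n).map f).prod = ∏ k ∈ Finset.range n, f k := by
  induction n with
  | zero => simp
  | succ n ih => simp [List.range_succ, Finset.prod_range_succ, ih]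

lemma my_swap_prod {ι : Type*} (s : Finset ι) (S : Multiset ℂ) (f : ι → ℂ → ℂ) :
    ∏ k ∈ s, (S.map (f k)).prod = (S.map (fun a => ∏ k ∈ s, f k a)).prod := by
  induction S using Multiset.induction with
  | empty => simp
  | cons a S ih => simp [Multiset.prod_cons, ih, Finset.prod_mul_distrib]

lemma my_roots_charpoly_pow {m : ℕ} (ℓ : ℕ) (hℓ : 1 ≤ ℓ) (A : Matrix (Fin m) (Fin m) ℂ) :
    (A ^ ℓ).charpoly.roots = A.charpoly.roots.map (· ^ ℓ) := by
  have hℓ0 : ℓ ≠ 0 := by omega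
  set p := A.charpoly with hp
  obtain ⟨ζ, hζ⟩ : ∃ ζ : ℂ, IsPrimitiveRoot ζ ℓ := ⟨_, Complex.isPrimitiveRoot_exp ℓ hℓ0⟩
  have hcard : p.roots.card = m := by
    rw [splits_iff_card_roots.mp (IsAlgClosed.splits p), hp,
      Matrix.charpoly_natDegree_eq_dim, Fintype.card_fin]
  have hpev : ∀ s : ℂ, p.eval s = (p.roots.map (fun μ => s - μ)).prod := by
    intro s
    rw [hp]
    conv_lhs => rw [(IsAlgClosed.splits A.charpoly).eq_prod_roots_of_monic (A.charpoly_monic)]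
    rw [eval_multiset_prod, Multiset.map_map]
    simp
  have hmain : (A ^ ℓ).charpoly = (p.roots.map (fun μ => X - C (μ ^ ℓ))).prod := by
    apply Polynomial.funext
    intro y
    obtain ⟨t, rfl⟩ := IsAlgClosed.exists_pow_nat_eq y (show 0 < ℓ by omega)
    -- RHS value
    have hrhs : ((p.roots.map (fun μ => X - C (μ ^ ℓ))).prod).eval (t ^ ℓ)
        = (p.roots.map (fun μ => t ^ ℓ - μ ^ ℓ)).prod := by
      rw [eval_multiset_prod, Multiset.map_map]
      simp
    -- factorization in ℂ[X]
    have hfact : (X ^ ℓ - C (t ^ ℓ) : ℂ[X]) = ∏ k ∈ Finset.range ℓ, (X - C (ζ ^ k * t)) :=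
      X_pow_sub_C_eq_prod hζ (show 0 < ℓ by omega) rfl
    -- matrix factorization
    have hmat : A ^ ℓ - (t ^ ℓ) • (1 : Matrix (Fin m) (Fin m) ℂ)
        = ((List.range ℓ).map (fun k => A - (ζ ^ k * t) • 1)).prod := by
      have h1 : (aeval A) ((X : ℂ[X]) ^ ℓ - C (t ^ ℓ)) = A ^ ℓ - (t ^ ℓ) • 1 := by
        simp [Algebra.algebraMap_eq_smul_one, _root_.smul_pow]
      have h2 : (aeval A) (((List.range ℓ).map (fun k => (X : ℂ[X]) - C (ζ ^ k * t))).prod)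
          = ((List.range ℓ).map (fun k => A - (ζ ^ k * t) • 1)).prod := by
        rw [map_list_prod (aeval A), List.map_map]
        refine congrArg List.prod (List.map_congr_left fun k _ => ?_)
        simp [Function.comp, Algebra.algebraMap_eq_smul_one, _root_.smul_pow, smul_smul, mul_comm]
      rw [← h1, ← h2, hfact, my_list_prod_range]
    -- determinant of the factorization
    have hdet : (A ^ ℓ - (t ^ ℓ) • (1 : Matrix (Fin m) (Fin m) ℂ)).det
        = ∏ k ∈ Finset.range ℓ, (A - (ζ ^ k * t) • 1).det := by
      rw [hmat, ← Matrix.coe_detMonoidHom,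
        map_list_prod (Matrix.detMonoidHom : Matrix (Fin m) (Fin m) ℂ →* ℂ), List.map_map,
        my_list_prod_range]
      rfl
    -- det (A - s•1) = (-1)^m * eval s p
    have hds : ∀ s : ℂ, (A - s • (1 : Matrix (Fin m) (Fin m) ℂ)).det = (-1) ^ m * p.eval s := by
      intro s
      have e1 : p.eval s = (-1 : ℂ) ^ m * (A - s • 1).det := by
        rw [hp, my_eval_charpoly, ← neg_sub A (s • (1 : Matrix (Fin m) (Fin m) ℂ)),
          Matrix.det_neg, Fintype.card_fin]
      rw [e1, ← mul_assoc, ← pow_add, Even.neg_one_pow ⟨m, rfl⟩, one_mul]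
    -- inner product over k
    have hinner : ∀ μ : ℂ, ∏ k ∈ Finset.range ℓ, (ζ ^ k * t - μ) = (-1) ^ (ℓ + 1) * (t ^ ℓ - μ ^ ℓ) := by
      intro μ
      have := congrArg (Polynomial.eval μ) hfact
      rw [eval_prod] at this
      simp only [eval_sub, eval_pow, eval_X, eval_C] at this
      calc ∏ k ∈ Finset.range ℓ, (ζ ^ k * t - μ)
          = ∏ k ∈ Finset.range ℓ, (-1 : ℂ) * (μ - ζ ^ k * t) := by
            apply Finset.prod_congr rfl; intro k _; ring
        _ = (-1 : ℂ) ^ ℓ * (μ ^ ℓ - t ^ ℓ) := by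
            rw [Finset.prod_mul_distrib, Finset.prod_const, ← this, Finset.card_range]
        _ = (-1) ^ (ℓ + 1) * (t ^ ℓ - μ ^ ℓ) := by ring
    -- assemble
    have hlhs : (A ^ ℓ).charpoly.eval (t ^ ℓ) = (p.roots.map (fun μ => t ^ ℓ - μ ^ ℓ)).prod := by
      rw [my_eval_charpoly, ← neg_sub (A ^ ℓ) ((t ^ ℓ) • (1 : Matrix (Fin m) (Fin m) ℂ)),
        Matrix.det_neg, Fintype.card_fin, hdet]
      have : ∀ k ∈ Finset.range ℓ, (A - (ζ ^ k * t) • (1 : Matrix (Fin m) (Fin m) ℂ)).det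
          = (-1 : ℂ) ^ m * (p.roots.map (fun μ => ζ ^ k * t - μ)).prod := by
        intro k _; rw [hds, hpev]
      rw [Finset.prod_congr rfl this, Finset.prod_mul_distrib, Finset.prod_const,
        Finset.card_range, my_swap_prod]
      have : (p.roots.map (fun a => ∏ k ∈ Finset.range ℓ, (ζ ^ k * t - a))).prod
          = (p.roots.map (fun a => (-1 : ℂ) ^ (ℓ + 1) * (t ^ ℓ - a ^ ℓ))).prod := by
        congr 1; exact Multiset.map_congr rfl (fun a _ => hinner a)
      rw [this]
      have : (p.roots.map (fun a => (-1 : ℂ) ^ (ℓ + 1) * (t ^ ℓ - a ^ ℓ))).prod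
          = ((-1 : ℂ) ^ (ℓ + 1)) ^ m * (p.roots.map (fun a => t ^ ℓ - a ^ ℓ)).prod := by
        rw [Multiset.prod_map_mul]
        congr 2
        rw [Multiset.map_const', Multiset.prod_replicate, hcard]
      rw [this]
      have hsign : (-1 : ℂ) ^ m * (((-1 : ℂ) ^ m) ^ ℓ * (((-1 : ℂ) ^ (ℓ + 1)) ^ m
          * (p.roots.map (fun a => t ^ ℓ - a ^ ℓ)).prod))
          = (p.roots.map (fun a => t ^ ℓ - a ^ ℓ)).prod := by
        rw [← pow_mul, ← pow_mul, ← mul_assoc, ← mul_assoc, ← pow_add, ← pow_add,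
          show m + m * ℓ + (ℓ + 1) * m = 2 * (m * (ℓ + 1)) by ring, pow_mul]
        norm_num
      exact hsign
    rw [hlhs, hrhs]
  rw [hmain, show Multiset.map (fun μ => X - C (μ ^ ℓ)) p.roots
      = Multiset.map (fun a => X - C a) (p.roots.map (· ^ ℓ)) by rw [Multiset.map_map]; rfl,
    roots_multiset_prod_X_sub_C]

/-- If `B^ℓ = D^ℓ` for some `ℓ ≥ 1`, then `|det(I − B)| ≤ ∏ᵢ (1 + |λᵢ|)` where
`λ₁,…,λ_m` are the eigenvalues of `D` counted with multiplicity. -/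
theorem abs_det_one_sub_le_of_pow_eq (m ℓ : ℕ) (hℓ : 1 ≤ ℓ)
    (D B : Matrix (Fin m) (Fin m) ℂ) (h : B ^ ℓ = D ^ ℓ) :
    ‖(1 - B).det‖ ≤
      (D.charpoly.roots.map (fun lam => 1 + ‖lam‖)).prod := by
  have hroots : B.charpoly.roots.map (· ^ ℓ) = D.charpoly.roots.map (· ^ ℓ) := by
    rw [← my_roots_charpoly_pow ℓ hℓ B, ← my_roots_charpoly_pow ℓ hℓ D, h]
  have hnn : B.charpoly.roots.map (fun z => ‖z‖₊) = D.charpoly.roots.map (fun z => ‖z‖₊) := by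
    have h2 := congrArg (Multiset.map (fun z : ℂ => ‖z‖₊)) hroots
    rw [Multiset.map_map, Multiset.map_map] at h2
    have h3 : (B.charpoly.roots.map (fun z : ℂ => ‖z‖₊)).map (fun x : NNReal => x ^ ℓ)
        = (D.charpoly.roots.map (fun z : ℂ => ‖z‖₊)).map (fun x : NNReal => x ^ ℓ) := by
      rw [Multiset.map_map, Multiset.map_map]
      simpa [Function.comp, nnnorm_pow] using h2
    have hinj : Function.Injective (fun x : NNReal => x ^ ℓ) := by
      intro x y hxy
      rcases lt_trichotomy x y with hlt | he | hlt
      · exact absurd hxy (ne_of_lt (pow_lt_pow_left₀ hlt zero_le (by omega)))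
      · exact he
      · exact absurd hxy.symm (ne_of_lt (pow_lt_pow_left₀ hlt zero_le (by omega)))
    exact Multiset.map_injective hinj h3
  have hev : (1 - B).det = B.charpoly.eval 1 := by rw [my_eval_charpoly, one_smul]
  have hprod : B.charpoly.eval 1 = (B.charpoly.roots.map (fun μ => 1 - μ)).prod := by
    conv_lhs => rw [(IsAlgClosed.splits B.charpoly).eq_prod_roots_of_monic B.charpoly_monic]
    rw [eval_multiset_prod, Multiset.map_map]
    simp
  rw [hev, hprod, show ‖(B.charpoly.roots.map (fun μ => 1 - μ)).prod‖ = ((B.charpoly.roots.map (fun μ => 1 - μ)).map (fun x => ‖x‖)).prod from map_multiset_prod (normHom : ℂ →*₀ ℝ) _, Multiset.map_map]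
  calc (B.charpoly.roots.map (fun μ => ‖1 - μ‖)).prod
      ≤ (B.charpoly.roots.map (fun μ => 1 + ‖μ‖)).prod := by
        refine Multiset.prod_map_le_prod_map₀ _ _ (fun i _ => norm_nonneg _)
          (fun i _ => ?_)
        simpa [sub_eq_add_neg] using norm_add_le 1 (-i)
    _ = (D.charpoly.roots.map (fun lam => 1 + ‖lam‖)).prod := by
        have key : ∀ (E : Matrix (Fin m) (Fin m) ℂ),
            E.charpoly.roots.map (fun μ => 1 + ‖μ‖)
            = (E.charpoly.roots.map (fun z : ℂ => ‖z‖₊)).map (fun x : NNReal => 1 + (x : ℝ)) := by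
          intro E
          rw [Multiset.map_map]
          refine Multiset.map_congr rfl (fun z _ => ?_)
          simp
        rw [key B, key D, hnn]
end

section
/- For i = 0,…,m let A_i be a square matrix with integer entries (of size m_i × m_i), and define L(k) = Σ_{i=0}^{m} (−1)^i · tr(A_i^k) for k ≥ 1. Then for every prime p and every integer r ≥ 1, L(p^r) ≡ L(p^{r−1}) (mod p^r). -/
open Finset

set_option linter.unusedSectionVars false

section Euler

variable {ι : Type*} [Fintype ι] [DecidableEq ι]

/-- Euler's congruence for integers: `p^k ∣ a^(p^k) - a^(p^(k-1))`. -/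
theorem intEuler (p : ℕ) (hp : p.Prime) (k : ℕ) (hk : 1 ≤ k) (a : ℤ) :
    ((p : ℤ) ^ k) ∣ a ^ p ^ k - a ^ p ^ (k - 1) := by
  haveI : Fact p.Prime := ⟨hp⟩
  have h1 : (p : ℤ) ∣ a ^ p - a := by
    have h := ZMod.pow_card (a : ZMod p)
    have : ((a ^ p - a : ℤ) : ZMod p) = 0 := by push_cast [h]; ring
    exact (ZMod.intCast_zmod_eq_zero_iff_dvd _ _).mp this
  have h2 := dvd_sub_pow_of_dvd_sub (p := p) (a := a ^ p) (b := a) h1 (k - 1)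
  have hk' : k - 1 + 1 = k := Nat.succ_pred_eq_of_pos hk
  rw [← pow_mul, ← pow_succ', hk'] at h2
  exact h2

/-- cyclic weight of a closed walk -/
def cw (n : ℕ) [NeZero n] (W : ι → ι → ℤ) (f : ZMod n → ι) : ℤ :=
  ∏ j : ZMod n, W (f j) (f (j + 1))

def rot (n : ℕ) (c : ZMod n) (f : ZMod n → ι) : ZMod n → ι := fun x => f (x + c)

theorem rot_zero (n : ℕ) (f : ZMod n → ι) : rot n 0 f = f := by
  funext x; simp [rot]

theorem rot_add (n : ℕ) (c d : ZMod n) (f : ZMod n → ι) :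
    rot n (c + d) f = rot n c (rot n d f) := by
  funext x; simp [rot]; ring_nf

theorem cw_rot (n : ℕ) [NeZero n] (W : ι → ι → ℤ) (c : ZMod n) (f : ZMod n → ι) :
    cw n W (rot n c f) = cw n W f := by
  unfold cw rot
  refine Fintype.prod_equiv (Equiv.addRight c) _ _ ?_
  intro x
  simp only [Equiv.coe_addRight]
  congr 2
  ring

theorem trace_mul_pow (A B : Matrix ι ι ℤ) (k : ℕ) :
    (B * A ^ k).trace =
      ∑ g : Fin (k + 1) → ι,
        B (g (Fin.last k)) (g 0) * ∏ m : Fin k, A (g m.castSucc) (g m.succ) := by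
  induction k generalizing B with
  | zero =>
    rw [pow_zero, mul_one]
    rw [← (Equiv.funUnique (Fin 1) ι).symm.sum_comp]
    simp [Matrix.trace, Matrix.diag]
  | succ k ih =>
    have h1 : B * A ^ (k + 1) = (B * A) * A ^ k := by
      rw [pow_succ']; rw [← mul_assoc]
    rw [h1, ih]
    rw [← (Fin.consEquiv (fun _ : Fin (k+2) => ι)).sum_comp]
    rw [Fintype.sum_prod_type]
    rw [Finset.sum_comm]
    apply Finset.sum_congr rfl; intro g _
    have hc : ∀ z : ι, (Fin.consEquiv (fun _ : Fin (k+2) => ι)) (z, g) = Fin.cons (α := fun _ => ι) z g :=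
      fun z => rfl
    simp only [hc]
    rw [Matrix.mul_apply, Finset.sum_mul]
    apply Finset.sum_congr rfl; intro z _
    rw [Fin.prod_univ_succ]
    simp only [Fin.cons_zero, Fin.cons_succ, Fin.castSucc_zero, Fin.succ_last,
      ← Fin.succ_castSucc]
    rw [← Fin.succ_last, Fin.cons_succ]
    ring

theorem trace_pow_eq_sum_cw (A : Matrix ι ι ℤ) (k : ℕ) [NeZero k] :
    (A ^ k).trace = ∑ f : ZMod k → ι, cw k A f := by
  have hk : 0 < k := Nat.pos_of_ne_zero (NeZero.ne k)
  have h := trace_mul_pow A 1 k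
  rw [one_mul] at h
  rw [h]
  have hite : ∀ g : Fin (k + 1) → ι,
      (1 : Matrix ι ι ℤ) (g (Fin.last k)) (g 0) * ∏ m : Fin k, A (g m.castSucc) (g m.succ)
        = if g (Fin.last k) = g 0 then ∏ m : Fin k, A (g m.castSucc) (g m.succ) else 0 := by
    intro g; rw [Matrix.one_apply]; split <;> simp
  rw [Finset.sum_congr rfl (fun g _ => hite g), ← Finset.sum_filter]
  refine (Finset.sum_nbij'
    (i := fun (f : ZMod k → ι) (m : Fin (k+1)) => f ((m.val : ℕ) : ZMod k))
    (j := fun (g : Fin (k+1) → ι) (jj : ZMod k) =>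
      g ⟨jj.val, lt_trans (ZMod.val_lt jj) (Nat.lt_succ_self k)⟩)
    ?_ ?_ ?_ ?_ ?_).symm
  · intro f _
    rw [Finset.mem_filter]
    exact ⟨Finset.mem_univ _, by simp [Fin.last, ZMod.natCast_self]⟩
  · intro g _; exact Finset.mem_univ _
  · intro f _
    funext jj
    simp only []
    congr 1
    simp [ZMod.natCast_val, ZMod.cast_id]
  · intro g hg
    rw [Finset.mem_filter] at hg
    funext m
    simp only []
    rcases lt_or_eq_of_le (Nat.lt_succ_iff.mp m.isLt) with hm | hm
    · congr 1
      apply Fin.ext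
      simp [ZMod.val_natCast, Nat.mod_eq_of_lt hm]
    · have e1 : ((m.val : ℕ) : ZMod k).val = 0 := by simp [ZMod.val_natCast, hm]
      have e2 : m = Fin.last k := Fin.ext hm
      rw [e2, hg.2]
      congr 1
      apply Fin.ext
      simp [e1]
  · intro f _
    unfold cw
    refine Finset.prod_nbij' (fun (jj : ZMod k) => (⟨jj.val, ZMod.val_lt jj⟩ : Fin k))
      (fun (m : Fin k) => ((m.val : ℕ) : ZMod k))
      (fun _ _ => Finset.mem_univ _) (fun _ _ => Finset.mem_univ _) ?_ ?_ ?_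
    · intro jj _
      simp [ZMod.natCast_val, ZMod.cast_id]
    · intro m _
      apply Fin.ext
      simp [ZMod.val_natCast, Nat.mod_eq_of_lt m.isLt]
    · intro jj _
      simp only [Fin.castSucc_mk, Fin.succ_mk]
      congr 2
      · simp [ZMod.natCast_val, ZMod.cast_id]
      · push_cast
        simp [ZMod.natCast_val, ZMod.cast_id]

/-- orbit-sum divisibility for a free `ZMod n`-action on `S` -/
theorem orbit_sum_dvd {α : Type*} [DecidableEq α] (n : ℕ) [NeZero n]
    (ρ : ZMod n → α → α) (hρ0 : ∀ x, ρ 0 x = x)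
    (hρadd : ∀ c d x, ρ (c + d) x = ρ c (ρ d x))
    (w : α → ℤ) (d : ℤ) (S : Finset α)
    (hclosed : ∀ c, ∀ x ∈ S, ρ c x ∈ S)
    (hinv : ∀ c, ∀ x ∈ S, w (ρ c x) = w x)
    (hfree : ∀ c, ∀ x ∈ S, ρ c x = x → c = 0)
    (hdvd : ∀ x ∈ S, d ∣ w x) :
    (n : ℤ) * d ∣ ∑ x ∈ S, w x := by
  revert hclosed hinv hfree hdvd
  induction S using Finset.strongInduction with
  | _ S ih =>
    intro hclosed hinv hfree hdvd
    rcases S.eq_empty_or_nonempty with rfl | ⟨x₀, hx₀⟩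
    · simp
    · set O : Finset α := Finset.image (fun c => ρ c x₀) Finset.univ with hO
      have hinj : Function.Injective (fun c => ρ c x₀) := by
        intro c e hce
        simp only at hce
        have h1 : ρ (c - e) (ρ e x₀) = ρ e x₀ := by
          rw [← hρadd, sub_add_cancel, hce]
        have := hfree (c - e) (ρ e x₀) (hclosed e x₀ hx₀) h1
        exact sub_eq_zero.mp this
      have hOsub : O ⊆ S := by
        intro y hy
        rw [hO, Finset.mem_image] at hy
        obtain ⟨c, _, rfl⟩ := hy
        exact hclosed c x₀ hx₀
      have hOsum : ∑ y ∈ O, w y = (n : ℤ) * w x₀ := by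
        rw [hO, Finset.sum_image (fun c _ e _ h => hinj h)]
        rw [Finset.sum_congr rfl (fun c _ => hinv c x₀ hx₀)]
        simp [ZMod.card, mul_comm]
      have hsplit : ∑ x ∈ S, w x = (∑ x ∈ S \ O, w x) + ∑ y ∈ O, w y :=
        (Finset.sum_sdiff hOsub).symm
      rw [hsplit]
      have hOx₀ : x₀ ∈ O := by
        rw [hO, Finset.mem_image]
        exact ⟨0, Finset.mem_univ _, hρ0 x₀⟩
      have hssub : S \ O ⊂ S := Finset.sdiff_ssubset hOsub ⟨x₀, hOx₀⟩
      refine dvd_add (ih _ hssub ?_ ?_ ?_ ?_) ?_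
      · intro c x hx
        rw [Finset.mem_sdiff] at hx ⊢
        refine ⟨hclosed c x hx.1, ?_⟩
        intro hmem
        apply hx.2
        rw [hO, Finset.mem_image] at hmem
        obtain ⟨e, _, he⟩ := hmem
        have hxc : ρ (-c) (ρ c x) = x := by
          rw [← hρadd, neg_add_cancel, hρ0]
        have : x = ρ (e - c) x₀ := by
          calc x = ρ (-c) (ρ c x) := hxc.symm
            _ = ρ (-c) (ρ e x₀) := by rw [he]
            _ = ρ (e - c) x₀ := by rw [← hρadd]; congr 1; ring
        rw [hO, Finset.mem_image]
        exact ⟨e - c, Finset.mem_univ _, this.symm⟩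
      · intro c x hx; exact hinv c x (Finset.mem_sdiff.mp hx).1
      · intro c x hx; exact hfree c x (Finset.mem_sdiff.mp hx).1
      · intro x hx; exact hdvd x (Finset.mem_sdiff.mp hx).1
      · rw [hOsum]
        exact mul_dvd_mul_left _ (hdvd x₀ hx₀)

/-- periodicity with period `q` -/
def Per (n q : ℕ) (f : ZMod n → ι) : Prop := ∀ x, f (x + (q : ZMod n)) = f x

instance (n q : ℕ) [NeZero n] : DecidablePred (Per (ι := ι) n q) :=
  fun _ => Fintype.decidableForallFintype (α := ZMod n)

theorem per_iterate {n q : ℕ} {f : ZMod n → ι} (hf : Per n q f) (b : ℕ) :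
    ∀ a : ℕ, f ((b + a * q : ℕ) : ZMod n) = f ((b : ℕ) : ZMod n) := by
  intro a
  induction a with
  | zero => simp
  | succ a ih =>
    have : (b + (a + 1) * q : ℕ) = (b + a * q) + q := by ring
    rw [this]
    push_cast
    have := hf (((b : ℕ) : ZMod n) + ((a : ℕ) : ZMod n) * ((q : ℕ) : ZMod n))
    rw [this]
    push_cast at ih
    exact ih

theorem rot_nat_mul {n : ℕ} (c : ZMod n) (f : ZMod n → ι) (h : rot n c f = f) :
    ∀ a : ℕ, rot n ((a : ZMod n) * c) f = f := by
  intro a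
  induction a with
  | zero => simpa using rot_zero n f
  | succ a ih =>
    have e : ((a + 1 : ℕ) : ZMod n) * c = (a : ZMod n) * c + c := by push_cast; ring
    rw [e, rot_add, h, ih]

/-- in `ZMod (p^t)`, every nonzero element has `p^(t-1)` in the subgroup it generates -/
theorem exists_mul_eq (p : ℕ) (hp : p.Prime) (t : ℕ) (ht : 1 ≤ t)
    [NeZero (p ^ t)] (c : ZMod (p ^ t)) (hc : c ≠ 0) :
    ∃ e : ℕ, (e : ZMod (p ^ t)) * c = ((p ^ (t - 1) : ℕ) : ZMod (p ^ t)) := by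
  have hvne : c.val ≠ 0 := fun h => hc (by rwa [← ZMod.val_eq_zero])
  have hgdvd : Nat.gcd c.val (p ^ t) ∣ p ^ t := Nat.gcd_dvd_right _ _
  have hglt : Nat.gcd c.val (p ^ t) < p ^ t :=
    lt_of_le_of_lt (Nat.le_of_dvd (Nat.pos_of_ne_zero hvne) (Nat.gcd_dvd_left _ _))
      (ZMod.val_lt c)
  obtain ⟨s, hs, hgs⟩ := (Nat.dvd_prime_pow hp).mp hgdvd
  have hst : s ≤ t - 1 := by
    rcases Nat.lt_or_ge s t with h | h
    · omega
    · exfalso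
      have hst' : s = t := le_antisymm hs h
      rw [hst'] at hgs; rw [hgs] at hglt; omega
  have hgq : Nat.gcd c.val (p ^ t) ∣ p ^ (t - 1) := hgs ▸ pow_dvd_pow p hst
  have hbez := Nat.gcd_eq_gcd_ab c.val (p ^ t)
  have hcast : ((Nat.gcd c.val (p ^ t) : ℕ) : ZMod (p ^ t))
      = c * ((Nat.gcdA c.val (p ^ t) : ℤ) : ZMod (p ^ t)) := by
    have h1 : (((Nat.gcd c.val (p ^ t) : ℕ) : ℤ) : ZMod (p ^ t))
        = (((c.val : ℤ) * Nat.gcdA c.val (p ^ t)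
            + ((p ^ t : ℕ) : ℤ) * Nat.gcdB c.val (p ^ t) : ℤ) : ZMod (p ^ t)) := by
      rw [← hbez]
    push_cast at h1
    have hz : ((p : ZMod (p ^ t))) ^ t = 0 := by
      rw [← Nat.cast_pow, ZMod.natCast_self]
    rw [hz] at h1
    simp only [zero_mul, add_zero] at h1
    rw [show ((c.val : ℕ) : ZMod (p ^ t)) = c by simp [ZMod.natCast_val, ZMod.cast_id]] at h1
    exact h1
  have hqg : Nat.gcd c.val (p ^ t) * (p ^ (t - 1) / Nat.gcd c.val (p ^ t)) = p ^ (t - 1) :=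
    Nat.mul_div_cancel' hgq
  refine ⟨((((Nat.gcdA c.val (p ^ t) : ℤ) : ZMod (p ^ t))
      * ((p ^ (t - 1) / Nat.gcd c.val (p ^ t) : ℕ) : ZMod (p ^ t))).val), ?_⟩
  have hval : ((((Nat.gcdA c.val (p ^ t) : ℤ) : ZMod (p ^ t))
      * ((p ^ (t - 1) / Nat.gcd c.val (p ^ t) : ℕ) : ZMod (p ^ t))).val : ZMod (p ^ t))
      = ((Nat.gcdA c.val (p ^ t) : ℤ) : ZMod (p ^ t))
        * ((p ^ (t - 1) / Nat.gcd c.val (p ^ t) : ℕ) : ZMod (p ^ t)) := by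
    simp [ZMod.natCast_val, ZMod.cast_id]
  rw [hval]
  calc ((Nat.gcdA c.val (p ^ t) : ℤ) : ZMod (p ^ t))
        * ((p ^ (t - 1) / Nat.gcd c.val (p ^ t) : ℕ) : ZMod (p ^ t)) * c
      = (c * ((Nat.gcdA c.val (p ^ t) : ℤ) : ZMod (p ^ t)))
        * ((p ^ (t - 1) / Nat.gcd c.val (p ^ t) : ℕ) : ZMod (p ^ t)) := by ring
    _ = ((Nat.gcd c.val (p ^ t) : ℕ) : ZMod (p ^ t))
        * ((p ^ (t - 1) / Nat.gcd c.val (p ^ t) : ℕ) : ZMod (p ^ t)) := by rw [hcast]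
    _ = ((Nat.gcd c.val (p ^ t) * (p ^ (t - 1) / Nat.gcd c.val (p ^ t)) : ℕ) : ZMod (p ^ t)) := by
        push_cast; ring
    _ = ((p ^ (t - 1) : ℕ) : ZMod (p ^ t)) := by rw [hqg]

theorem nonper_free (p : ℕ) (hp : p.Prime) (t : ℕ) (ht : 1 ≤ t) [NeZero (p ^ t)]
    (f : ZMod (p ^ t) → ι) (hnp : ¬ Per (p ^ t) (p ^ (t - 1)) f)
    (c : ZMod (p ^ t)) (hc : rot (p ^ t) c f = f) : c = 0 := by
  by_contra hc0
  obtain ⟨e, he⟩ := exists_mul_eq p hp t ht c hc0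
  have h2 := rot_nat_mul c f hc e
  rw [he] at h2
  apply hnp
  intro x
  exact congrFun h2 x

theorem prod_comp_proj {M : Type*} [CommMonoid M] (n n' p' : ℕ) [NeZero n'] [NeZero p']
    [NeZero n] (hmul : n = n' * p') (u : ZMod n' → M) :
    ∏ x : ZMod n, u (ZMod.castHom (⟨p', hmul⟩ : n' ∣ n) (ZMod n') x)
      = (∏ y : ZMod n', u y) ^ p' := by
  have hn' : 0 < n' := Nat.pos_of_ne_zero (NeZero.ne n')
  have hp' : 0 < p' := Nat.pos_of_ne_zero (NeZero.ne p')
  have hval : ∀ x : ZMod n, (ZMod.castHom (⟨p', hmul⟩ : n' ∣ n) (ZMod n') x).val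
      = x.val % n' := by
    intro x
    rw [ZMod.castHom_apply, ← ZMod.natCast_val, ZMod.val_natCast]
  have key : ∏ x : ZMod n, u (ZMod.castHom (⟨p', hmul⟩ : n' ∣ n) (ZMod n') x)
      = ∏ z : ZMod n' × Fin p', u z.1 := by
    refine Finset.prod_nbij'
      (fun x => (ZMod.castHom (⟨p', hmul⟩ : n' ∣ n) (ZMod n') x,
        ⟨x.val / n', by
          have h := lt_of_lt_of_le (ZMod.val_lt x) (le_of_eq hmul)
          exact Nat.div_lt_of_lt_mul h⟩))
      (fun z => ((z.1.val + z.2.val * n' : ℕ) : ZMod n))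
      (fun _ _ => Finset.mem_univ _) (fun _ _ => Finset.mem_univ _) ?_ ?_ ?_
    · -- left inverse
      intro x _
      simp only [hval]
      rw [Nat.mod_add_div' x.val n']
      simp [ZMod.natCast_val, ZMod.cast_id]
    · -- right inverse
      intro z _
      have hlt : z.1.val + z.2.val * n' < n := by
        have h1 : z.1.val < n' := ZMod.val_lt z.1
        have h2 : z.2.val < p' := z.2.isLt
        have h3 : z.2.val * n' ≤ (p' - 1) * n' := Nat.mul_le_mul_right _ (by omega)
        have h4 : (p' - 1) * n' + n' = n := by
          rw [hmul]
          cases p' with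
          | zero => omega
          | succ q => simp [Nat.succ_sub_one]; ring
        omega
      have hv : ((z.1.val + z.2.val * n' : ℕ) : ZMod n).val = z.1.val + z.2.val * n' := by
        rw [ZMod.val_natCast, Nat.mod_eq_of_lt hlt]
      refine Prod.ext ?_ ?_
      · simp only [ZMod.castHom_apply]
        rw [← ZMod.natCast_val, hv]
        push_cast
        rw [ZMod.natCast_self]
        simp [ZMod.natCast_val, ZMod.cast_id]
      · apply Fin.ext
        simp only [hv]
        rw [Nat.add_mul_div_right _ _ hn', Nat.div_eq_of_lt (ZMod.val_lt z.1)]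
        simp
    · intro x _
      rfl
  rw [key, Fintype.prod_prod_type]
  rw [← Finset.prod_pow]
  apply Finset.prod_congr rfl
  intro y _
  simp

theorem per_rot {n q : ℕ} (c : ZMod n) (f : ZMod n → ι) (hf : Per n q f) :
    Per n q (rot n c f) := by
  intro x
  unfold rot
  have := hf (x + c)
  calc f (x + (q : ZMod n) + c) = f (x + c + (q : ZMod n)) := by ring_nf
    _ = f (x + c) := hf (x + c)

theorem per_rot_iff {n q : ℕ} (c : ZMod n) (f : ZMod n → ι) :
    Per n q (rot n c f) ↔ Per n q f := by
  constructor
  · intro h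
    have h2 := per_rot (-c) _ h
    rw [← rot_add, neg_add_cancel, rot_zero] at h2
    exact h2
  · exact per_rot c f

theorem per_val_mod {n n' : ℕ} [NeZero n] (f : ZMod n → ι) (hf : Per n n' f) (x : ZMod n) :
    f (((x.val % n' : ℕ) : ZMod n)) = f x := by
  have h := per_iterate hf (x.val % n') (x.val / n')
  rw [Nat.mod_add_div' x.val n'] at h
  rw [show ((x.val : ℕ) : ZMod n) = x by simp [ZMod.natCast_val, ZMod.cast_id]] at h
  exact h.symm

theorem cw_comp (n n' p' : ℕ) [NeZero n'] [NeZero p'] [NeZero n] (hmul : n = n' * p')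
    (W : ι → ι → ℤ) (g : ZMod n' → ι) :
    cw n W (fun x => g (ZMod.castHom (⟨p', hmul⟩ : n' ∣ n) (ZMod n') x))
      = (cw n' W g) ^ p' := by
  unfold cw
  rw [← prod_comp_proj n n' p' hmul (fun y => W (g y) (g (y + 1)))]
  apply Finset.prod_congr rfl
  intro x _
  simp only [map_add, map_one]

theorem sum_per_eq (n n' p' : ℕ) [NeZero n'] [NeZero p'] [NeZero n] (hmul : n = n' * p')
    (W : ι → ι → ℤ) (V : ℤ → ℤ) :
    ∑ f ∈ Finset.univ.filter (Per (ι := ι) n n'), V (cw n W f)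
      = ∑ g : ZMod n' → ι, V ((cw n' W g) ^ p') := by
  refine Finset.sum_nbij'
    (i := fun (f : ZMod n → ι) (y : ZMod n') => f ((y.val : ℕ) : ZMod n))
    (j := fun (g : ZMod n' → ι) (x : ZMod n) =>
      g (ZMod.castHom (⟨p', hmul⟩ : n' ∣ n) (ZMod n') x))
    ?_ ?_ ?_ ?_ ?_
  · intro f _; exact Finset.mem_univ _
  · -- j g is periodic
    intro g _
    rw [Finset.mem_filter]
    refine ⟨Finset.mem_univ _, ?_⟩
    intro x
    simp only [map_add]
    have : (ZMod.castHom (⟨p', hmul⟩ : n' ∣ n) (ZMod n')) ((n' : ℕ) : ZMod n) = 0 := by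
      rw [map_natCast, ZMod.natCast_self]
    rw [this, add_zero]
  · -- left_inv : j (i f) = f  for f periodic
    intro f hf
    rw [Finset.mem_filter] at hf
    funext x
    dsimp only
    have hval : ((ZMod.castHom (⟨p', hmul⟩ : n' ∣ n) (ZMod n')) x).val = x.val % n' := by
      rw [ZMod.castHom_apply, ← ZMod.natCast_val, ZMod.val_natCast]
    rw [hval]
    exact per_val_mod f hf.2 x
  · -- right_inv : i (j g) = g
    intro g _
    funext y
    dsimp only
    rw [map_natCast]
    congr 1
    simp [ZMod.natCast_val, ZMod.cast_id]
  · -- values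
    intro f hf
    rw [Finset.mem_filter] at hf
    congr 1
    rw [← cw_comp n n' p' hmul W]
    congr 1
    funext x
    have hval : ((ZMod.castHom (⟨p', hmul⟩ : n' ∣ n) (ZMod n')) x).val = x.val % n' := by
      rw [ZMod.castHom_apply, ← ZMod.natCast_val, ZMod.val_natCast]
    rw [hval]
    exact (per_val_mod f hf.2 x).symm


theorem key_dvd (p : ℕ) (hp : p.Prime) (r : ℕ) (hr : 1 ≤ r) (W : ι → ι → ℤ) :
    ∀ t, t ≤ r - 1 →
    haveI : NeZero (p ^ t) := ⟨pow_ne_zero t hp.ne_zero⟩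
    ((p : ℤ) ^ r) ∣ ∑ f : ZMod (p ^ t) → ι,
      ((cw (p ^ t) W f) ^ (p ^ (r - t)) - (cw (p ^ t) W f) ^ (p ^ (r - 1 - t))) := by
  intro t
  induction t with
  | zero =>
    intro _
    haveI : NeZero (p ^ 0) := ⟨pow_ne_zero 0 hp.ne_zero⟩
    refine Finset.dvd_sum ?_
    intro f _
    simpa using intEuler p hp r hr (cw (p ^ 0) W f)
  | succ t ih =>
    intro ht
    haveI h1 : NeZero (p ^ (t + 1)) := ⟨pow_ne_zero _ hp.ne_zero⟩
    haveI h2 : NeZero (p ^ t) := ⟨pow_ne_zero _ hp.ne_zero⟩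
    haveI h3 : NeZero p := ⟨hp.ne_zero⟩
    have hmul : p ^ (t + 1) = p ^ t * p := pow_succ p t
    rw [← Finset.sum_filter_add_sum_filter_not Finset.univ
      (Per (ι := ι) (p ^ (t + 1)) (p ^ t))]
    refine dvd_add ?_ ?_
    · -- periodic part reduces to level t
      rw [sum_per_eq (p ^ (t + 1)) (p ^ t) p hmul W
        (fun a => a ^ (p ^ (r - (t + 1))) - a ^ (p ^ (r - 1 - (t + 1))))]
      have hexp : ∀ a : ℤ, (a ^ p) ^ (p ^ (r - (t + 1))) - (a ^ p) ^ (p ^ (r - 1 - (t + 1)))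
          = a ^ (p ^ (r - t)) - a ^ (p ^ (r - 1 - t)) := by
        intro a
        rw [← pow_mul, ← pow_mul, ← pow_succ', ← pow_succ']
        have e1 : r - (t + 1) + 1 = r - t := by omega
        have e2 : r - 1 - (t + 1) + 1 = r - 1 - t := by omega
        rw [e1, e2]
      rw [Finset.sum_congr rfl (fun g _ => hexp (cw (p ^ t) W g))]
      exact ih (by omega)
    · -- non-periodic part: orbit divisibility
      have hd : ((p : ℤ) ^ (t + 1)) * ((p : ℤ) ^ (r - t - 1)) = (p : ℤ) ^ r := by
        rw [← pow_add]
        congr 1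
        omega
      have horb := orbit_sum_dvd (p ^ (t + 1)) (rot (p ^ (t + 1))) (rot_zero _)
        (rot_add _) (fun f => (cw (p ^ (t + 1)) W f) ^ (p ^ (r - (t + 1)))
          - (cw (p ^ (t + 1)) W f) ^ (p ^ (r - 1 - (t + 1))))
        ((p : ℤ) ^ (r - t - 1))
        (Finset.univ.filter (fun f => ¬ Per (p ^ (t + 1)) (p ^ t) f))
        ?_ ?_ ?_ ?_
      · have : ((p ^ (t + 1) : ℕ) : ℤ) * ((p : ℤ) ^ (r - t - 1)) = (p : ℤ) ^ r := by
          push_cast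
          rw [← pow_add]
          congr 1
          omega
        rwa [this] at horb
      · intro c f hf
        rw [Finset.mem_filter] at hf ⊢
        refine ⟨Finset.mem_univ _, ?_⟩
        intro hper
        exact hf.2 ((per_rot_iff c f).mp hper)
      · intro c f _
        rw [cw_rot]
      · intro c f hf hfix
        rw [Finset.mem_filter] at hf
        refine nonper_free p hp (t + 1) (by omega) f ?_ c hfix
        rw [Nat.add_sub_cancel]
        exact hf.2
      · intro f _
        have := intEuler p hp (r - (t + 1)) (by omega) (cw (p ^ (t + 1)) W f)
        have e : r - (t + 1) - 1 = r - 1 - (t + 1) := by omega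
        rw [e] at this
        have e2 : r - t - 1 = r - (t + 1) := by omega
        rw [e2]
        exact this

theorem single_dvd (p : ℕ) (hp : p.Prime) (r : ℕ) (hr : 1 ≤ r)
    (A : Matrix ι ι ℤ) :
    ((p : ℤ) ^ r) ∣ (A ^ (p ^ r)).trace - (A ^ (p ^ (r - 1))).trace := by
  haveI h1 : NeZero (p ^ r) := ⟨pow_ne_zero _ hp.ne_zero⟩
  haveI h2 : NeZero (p ^ (r - 1)) := ⟨pow_ne_zero _ hp.ne_zero⟩
  haveI h3 : NeZero p := ⟨hp.ne_zero⟩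
  have hmul : p ^ r = p ^ (r - 1) * p := by
    rw [← pow_succ]
    congr 1
    omega
  rw [trace_pow_eq_sum_cw A (p ^ r), trace_pow_eq_sum_cw A (p ^ (r - 1))]
  rw [← Finset.sum_filter_add_sum_filter_not Finset.univ
    (Per (ι := ι) (p ^ r) (p ^ (r - 1))) (fun f => cw (p ^ r) A f)]
  rw [sum_per_eq (p ^ r) (p ^ (r - 1)) p hmul A (fun a => a)]
  have hre : (∑ g : ZMod (p ^ (r - 1)) → ι, (cw (p ^ (r - 1)) A g) ^ p)
      + (∑ f ∈ Finset.univ.filter (fun f => ¬ Per (p ^ r) (p ^ (r - 1)) f), cw (p ^ r) A f)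
      - ∑ g : ZMod (p ^ (r - 1)) → ι, cw (p ^ (r - 1)) A g
      = (∑ f ∈ Finset.univ.filter (fun f => ¬ Per (p ^ r) (p ^ (r - 1)) f), cw (p ^ r) A f)
        + ∑ g : ZMod (p ^ (r - 1)) → ι,
            ((cw (p ^ (r - 1)) A g) ^ p - cw (p ^ (r - 1)) A g) := by
    rw [Finset.sum_sub_distrib]
    ring
  rw [hre]
  refine dvd_add ?_ ?_
  · -- nonperiodic part of the p^r level
    have horb := orbit_sum_dvd (p ^ r) (rot (p ^ r)) (rot_zero _) (rot_add _)
      (fun f => cw (p ^ r) A f) 1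
      (Finset.univ.filter (fun f => ¬ Per (p ^ r) (p ^ (r - 1)) f))
      ?_ ?_ ?_ ?_
    · rw [mul_one] at horb
      have : ((p ^ r : ℕ) : ℤ) = (p : ℤ) ^ r := by push_cast; ring
      rwa [this] at horb
    · intro c f hf
      rw [Finset.mem_filter] at hf ⊢
      exact ⟨Finset.mem_univ _, fun hper => hf.2 ((per_rot_iff c f).mp hper)⟩
    · intro c f _
      exact cw_rot (p ^ r) A c f
    · intro c f hf hfix
      rw [Finset.mem_filter] at hf
      exact nonper_free p hp r hr f hf.2 c hfix
    · intro f _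
      exact one_dvd _
  · have := key_dvd p hp r hr A (r - 1) (le_refl _)
    have e1 : r - (r - 1) = 1 := by omega
    have e2 : r - 1 - (r - 1) = 0 := by omega
    rw [e1, e2] at this
    simpa using this

end Euler

/-- Euler congruence for Lefschetz-number-type sequences: with
`L(k) = Σᵢ (−1)ⁱ·tr(Aᵢᵏ)` for integer matrices `Aᵢ`, one has
`L(p^r) ≡ L(p^{r−1}) (mod p^r)` for every prime `p` and `r ≥ 1`. -/
theorem euler_congruence_lefschetz (m : ℕ) (sz : Fin (m + 1) → ℕ)
    (A : (i : Fin (m + 1)) → Matrix (Fin (sz i)) (Fin (sz i)) ℤ)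
    (p : ℕ) (hp : p.Prime) (r : ℕ) (hr : 1 ≤ r) :
    (∑ i : Fin (m + 1), (-1 : ℤ) ^ (i : ℕ) * (A i ^ (p ^ r)).trace) ≡
      (∑ i : Fin (m + 1), (-1 : ℤ) ^ (i : ℕ) * (A i ^ (p ^ (r - 1))).trace)
        [ZMOD (p ^ r)] := by
  have hdvd : ((p : ℤ) ^ r) ∣
      (∑ i : Fin (m + 1), (-1 : ℤ) ^ (i : ℕ) * (A i ^ (p ^ r)).trace)
      - (∑ i : Fin (m + 1), (-1 : ℤ) ^ (i : ℕ) * (A i ^ (p ^ (r - 1))).trace) := by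
    rw [← Finset.sum_sub_distrib]
    refine Finset.dvd_sum ?_
    intro i _
    have h := single_dvd p hp r hr (A i)
    have : (-1 : ℤ) ^ (i : ℕ) * (A i ^ (p ^ r)).trace
        - (-1 : ℤ) ^ (i : ℕ) * (A i ^ (p ^ (r - 1))).trace
        = (-1 : ℤ) ^ (i : ℕ) * ((A i ^ (p ^ r)).trace - (A i ^ (p ^ (r - 1))).trace) := by
      ring
    rw [this]
    exact Dvd.dvd.mul_left h _
  have hmod := (Int.modEq_iff_dvd.mpr hdvd).symm
  have hcast : ((p ^ r : ℕ) : ℤ) = (p : ℤ) ^ r := by push_cast; ring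
  exact hmod
end
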